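/- arXiv:1711.02135 — 3 statements merged into one kernel-verified Lean document; each statement's English description precedes it below -/
import Mathlib

section
/- Let ℝ^d = ⊕_{i=1}^k E^i be an orthogonal decomposition, λ'_1 > ... > λ'_k real numbers, κ := (1/2)·min_i(λ'_i − λ'_{i+1}), and 0 < δ < κ/2. Let A ∈ GL(d,ℝ) preserve each E^i with ‖A|_{E^i}‖ and ‖(A|_{E^i})⁻¹‖⁻¹ lying in (e^{λ'_i − δ/4}, e^{λ'_i + δ/4}). For j < k and γ > 0, define the cone K^j_γ := {v : ‖∑_{i≥j+1} v^i‖ < γ·‖∑_{i≤j} v^i‖} where v = ∑ v^i is the decomposition along the E^i. Then A(K^j_γ) ⊂ K^j_{γ·e^{−κ+δ/4}} for every j and every γ > 0. -/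
noncomputable section

abbrev Euc (d : ℕ) := EuclideanSpace ℝ (Fin d)

/-- Orthogonal projection onto a subspace of ℝ^d, as a map into the ambient space. -/
noncomputable def projS {d : ℕ} (V : Submodule ℝ (Euc d)) : Euc d →L[ℝ] Euc d :=
  V.subtypeL ∘L V.orthogonalProjectionOnto

/-- `Vlow E j` = span of `E^1, ..., E^j` (the subspaces of paper-index `≤ j`, i.e.
0-indexed `i` with `(i : ℕ) < j`). -/
def Vlow {d k : ℕ} (E : Fin k → Submodule ℝ (Euc d)) (j : ℕ) : Submodule ℝ (Euc d) :=
  ⨆ (i : Fin k) (_ : (i : ℕ) < j), E i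

/-- The cone `K^j_γ = {v : ‖∑_{i≥j+1} v^i‖ < γ ‖∑_{i≤j} v^i‖}`; since the splitting is
orthogonal, `∑_{i≤j} v^i` is the orthogonal projection of `v` onto `E^1 ⊕ ... ⊕ E^j`. -/
def coneU {d k : ℕ} (E : Fin k → Submodule ℝ (Euc d)) (j : ℕ) (γ : ℝ) : Set (Euc d) :=
  {v | ‖v - projS (Vlow E j) v‖ < γ * ‖projS (Vlow E j) v‖}

/-- Pythagoras for a pairwise-orthogonal family. -/
lemma pythag {d k : ℕ} (E : Fin k → Submodule ℝ (Euc d))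
    (horth : ∀ i j : Fin k, i ≠ j → ∀ v ∈ E i, ∀ w ∈ E j, (inner ℝ v w : ℝ) = 0)
    (f : Fin k → Euc d) (hf : ∀ i, f i ∈ E i) :
    ‖∑ i, f i‖ ^ 2 = ∑ i, ‖f i‖ ^ 2 := by
  rw [← real_inner_self_eq_norm_sq, sum_inner]
  refine Finset.sum_congr rfl fun i _ => ?_
  rw [inner_sum, Finset.sum_eq_single i]
  · exact real_inner_self_eq_norm_sq _
  · intro l _ hl
    exact horth i l (fun h => hl (h ▸ rfl)) (f i) (hf i) (f l) (hf l)
  · intro h; exact absurd (Finset.mem_univ i) h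

/-- Norm comparison on a partial span. -/
lemma norm_comp {d k : ℕ} (E : Fin k → Submodule ℝ (Euc d))
    (horth : ∀ i j : Fin k, i ≠ j → ∀ v ∈ E i, ∀ w ∈ E j, (inner ℝ v w : ℝ) = 0)
    (A B : Euc d →L[ℝ] Euc d)
    (hA : ∀ i, ∀ v ∈ E i, A v ∈ E i) (hB : ∀ i, ∀ v ∈ E i, B v ∈ E i)
    (P : Fin k → Prop)
    (h : ∀ i, P i → ∀ v ∈ E i, ‖A v‖ ≤ ‖B v‖) :
    ∀ p ∈ ⨆ i, ⨆ (_ : P i), E i, ‖A p‖ ≤ ‖B p‖ := by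
  intro p hp
  rw [Submodule.mem_iSup_iff_exists_finsupp] at hp
  obtain ⟨f, hf, hsum⟩ := hp
  have hsum' : ∑ i, f i = p := by
    rw [← hsum, Finsupp.sum_fintype]; intro i; rfl
  have hfE : ∀ i, f i ∈ E i := by
    intro i
    by_cases hPi : P i
    · have := hf i; rwa [iSup_pos hPi] at this
    · have := hf i; rw [iSup_neg hPi, Submodule.mem_bot] at this
      rw [this]; exact zero_mem _
  have hcomp : ∀ i, ‖A (f i)‖ ≤ ‖B (f i)‖ := by
    intro i
    by_cases hPi : P i
    · exact h i hPi (f i) (hfE i)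
    · have := hf i; rw [iSup_neg hPi, Submodule.mem_bot] at this
      rw [this]; simp
  have hA2 : ‖A p‖ ^ 2 = ∑ i, ‖A (f i)‖ ^ 2 := by
    rw [← hsum', map_sum]
    exact pythag E horth _ (fun i => hA i (f i) (hfE i))
  have hB2 : ‖B p‖ ^ 2 = ∑ i, ‖B (f i)‖ ^ 2 := by
    rw [← hsum', map_sum]
    exact pythag E horth _ (fun i => hB i (f i) (hfE i))
  have hsq : ‖A p‖ ^ 2 ≤ ‖B p‖ ^ 2 := by
    rw [hA2, hB2]
    exact Finset.sum_le_sum fun i _ =>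
      pow_le_pow_left₀ (norm_nonneg _) (hcomp i) 2
  nlinarith [norm_nonneg (A p), norm_nonneg (B p)]

theorem cone_contraction {d k : ℕ} (E : Fin k → Submodule ℝ (Euc d))
    (horth : ∀ i j : Fin k, i ≠ j → ∀ v ∈ E i, ∀ w ∈ E j, (inner ℝ v w : ℝ) = 0)
    (hspan : (⨆ i, E i) = ⊤)
    (lam : Fin k → ℝ) (hlam : StrictAnti lam) (κ δ : ℝ)
    (hκ : IsLeast {x : ℝ | ∃ i j : Fin k, (j : ℕ) = (i : ℕ) + 1 ∧ x = (lam i - lam j) / 2} κ)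
    (hδ : 0 < δ) (hδκ : δ < κ / 2)
    (A : Euc d →L[ℝ] Euc d)
    (hApres : ∀ i : Fin k, ∀ v ∈ E i, A v ∈ E i)
    (hAnorm : ∀ i : Fin k, ∀ v ∈ E i, v ≠ 0 →
      Real.exp (lam i - δ / 4) * ‖v‖ < ‖A v‖ ∧ ‖A v‖ < Real.exp (lam i + δ / 4) * ‖v‖) :
    ∀ j : ℕ, 1 ≤ j → j ≤ k - 1 → ∀ γ : ℝ, 0 < γ →
      ⇑A '' coneU E j γ ⊆ coneU E j (γ * Real.exp (-κ + δ / 4)) := by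
  intro j hj1 hjk γ hγ
  have hκpos : 0 < κ := by linarith
  have hk2 : 2 ≤ k := by omega
  have hjk' : j < k := by omega
  set i₁ : Fin k := ⟨j - 1, by omega⟩ with hi₁
  set i₂ : Fin k := ⟨j, hjk'⟩ with hi₂
  have hκle : κ ≤ (lam i₁ - lam i₂) / 2 := hκ.2 ⟨i₁, i₂, by simp [hi₁, hi₂]; omega, rfl⟩
  set c : ℝ := Real.exp (lam i₁ - δ / 4) with hc
  set C : ℝ := Real.exp (lam i₂ + δ / 4) with hC
  have hcpos : 0 < c := Real.exp_pos _
  have hCpos : 0 < C := Real.exp_pos _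
  set U : Submodule ℝ (Euc d) := Vlow E j with hUdef
  set W : Submodule ℝ (Euc d) := ⨆ (i : Fin k) (_ : ¬ ((i : ℕ) < j)), E i with hWdef
  have hEU : ∀ i : Fin k, (i : ℕ) < j → E i ≤ U := fun i hi =>
    le_iSup₂ (f := fun (i : Fin k) (_ : (i : ℕ) < j) => E i) i hi
  have hEW : ∀ i : Fin k, ¬ ((i : ℕ) < j) → E i ≤ W := fun i hi =>
    le_iSup₂ (f := fun (i : Fin k) (_ : ¬ ((i : ℕ) < j)) => E i) i hi
  -- A preserves U and W
  have hAU : ∀ v ∈ U, A v ∈ U := by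
    intro v hv
    have : U ≤ U.comap (A : Euc d →ₗ[ℝ] Euc d) := by
      rw [hUdef]; rw [Vlow]
      exact iSup₂_le fun i hi v hv => hEU i hi (hApres i v hv)
    exact this hv
  have hAW : ∀ v ∈ W, A v ∈ W := by
    intro v hv
    have : W ≤ W.comap (A : Euc d →ₗ[ℝ] Euc d) := by
      rw [hWdef]
      exact iSup₂_le fun i hi v hv => hEW i hi (hApres i v hv)
    exact this hv
  -- W ≤ Uᗮ
  have hWU : W ≤ Uᗮ := by
    refine iSup₂_le fun i hi w hw => ?_
    rw [Submodule.mem_orthogonal]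
    intro u hu
    have : U ≤ (E i)ᗮ := by
      rw [hUdef]; rw [Vlow]
      refine iSup₂_le fun l hl u hu => ?_
      rw [Submodule.mem_orthogonal]
      intro w' hw'
      exact horth i l (fun h => hi (by rw [h]; exact hl)) w' hw' u hu
    have h0 := (Submodule.mem_orthogonal _ _).mp (this hu) w hw
    rw [real_inner_comm]; exact h0
  -- U ⊔ W = ⊤
  have hsup : U ⊔ W = ⊤ := by
    rw [← hspan]
    apply le_antisymm
    · exact sup_le (iSup₂_le fun i _ => le_iSup E i) (iSup₂_le fun i _ => le_iSup E i)
    · refine iSup_le fun i => ?_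
      by_cases hi : (i : ℕ) < j
      · exact le_trans (hEU i hi) le_sup_left
      · exact le_trans (hEW i hi) le_sup_right
  -- projection formula
  have hproj : ∀ p ∈ U, ∀ q ∈ W, projS U (p + q) = p := by
    intro p hp q hq
    have hqo : q ∈ Uᗮ := hWU hq
    simp only [projS, ContinuousLinearMap.comp_apply, map_add]
    rw [Submodule.orthogonalProjectionOnto_mem_subspace_eq_self ⟨p, hp⟩,
      Submodule.orthogonalProjectionOnto_apply_of_mem_orthogonal hqo]
    simp
  -- lower bound on U, upper bound on W
  have hlow : ∀ p ∈ U, c * ‖p‖ ≤ ‖A p‖ := by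
    intro p hp
    have := norm_comp E horth (c • ContinuousLinearMap.id ℝ (Euc d)) A
      (fun i v hv => by simpa using Submodule.smul_mem _ c hv) hApres
      (fun i => (i : ℕ) < j) ?_ p hp
    · simpa [norm_smul, abs_of_pos hcpos] using this
    · intro i hi v hv
      rcases eq_or_ne v 0 with rfl | hv0
      · simp
      · have h1 := (hAnorm i v hv hv0).1
        have hmono : c ≤ Real.exp (lam i - δ / 4) := by
          apply Real.exp_le_exp.mpr
          have : lam i₁ ≤ lam i := by
            rcases eq_or_ne i i₁ with rfl | hne
            · rfl
            · have : i < i₁ := by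
                rw [Fin.lt_def]
                have : (i : ℕ) ≤ j - 1 := by omega
                rcases lt_or_eq_of_le this with h | h
                · exact h
                · exact absurd (Fin.ext h : i = i₁) hne
              exact le_of_lt (hlam this)
          linarith
        have : c * ‖v‖ ≤ Real.exp (lam i - δ / 4) * ‖v‖ :=
          mul_le_mul_of_nonneg_right hmono (norm_nonneg _)
        simp only [ContinuousLinearMap.smul_apply, ContinuousLinearMap.id_apply,
          norm_smul, Real.norm_eq_abs, abs_of_pos hcpos]
        linarith
  have hhigh : ∀ q ∈ W, ‖A q‖ ≤ C * ‖q‖ := by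
    intro q hq
    have := norm_comp E horth A (C • ContinuousLinearMap.id ℝ (Euc d))
      hApres (fun i v hv => by simpa using Submodule.smul_mem _ C hv)
      (fun i => ¬ ((i : ℕ) < j)) ?_ q hq
    · simpa [norm_smul, abs_of_pos hCpos] using this
    · intro i hi v hv
      rcases eq_or_ne v 0 with rfl | hv0
      · simp
      · have h2 := (hAnorm i v hv hv0).2
        have hmono : Real.exp (lam i + δ / 4) ≤ C := by
          apply Real.exp_le_exp.mpr
          have : lam i ≤ lam i₂ := by
            rcases eq_or_ne i i₂ with rfl | hne
            · rfl
            · have : i₂ < i := by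
                have h' : (i₂ : ℕ) = j := rfl
                rw [Fin.lt_def, h']
                omega
              exact le_of_lt (hlam this)
          linarith
        have : Real.exp (lam i + δ / 4) * ‖v‖ ≤ C * ‖v‖ :=
          mul_le_mul_of_nonneg_right hmono (norm_nonneg _)
        simp only [ContinuousLinearMap.smul_apply, ContinuousLinearMap.id_apply,
          norm_smul, Real.norm_eq_abs, abs_of_pos hCpos]
        linarith
  -- main argument
  rintro _ ⟨v, hv, rfl⟩
  have hvtop : v ∈ U ⊔ W := by rw [hsup]; trivial
  obtain ⟨p, hp, q, hq, rfl⟩ := Submodule.mem_sup.mp hvtop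
  have hproj_v : projS U (p + q) = p := hproj p hp q hq
  have hcone : ‖q‖ < γ * ‖p‖ := by
    have := hv
    simp only [coneU, Set.mem_setOf_eq, ← hUdef, hproj_v] at this
    simpa using this
  have hpne : p ≠ 0 := by
    rintro rfl
    simp at hcone
    nlinarith [norm_nonneg q]
  have hproj_Av : projS U (A (p + q)) = A p := by
    rw [map_add]
    exact hproj (A p) (hAU p hp) (A q) (hAW q hq)
  simp only [coneU, Set.mem_setOf_eq, ← hUdef]
  rw [hproj_Av, map_add, add_sub_cancel_left]
  -- ‖A q‖ < γ exp(-κ+δ/4) ‖A p‖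
  have hBp : c * ‖p‖ ≤ ‖A p‖ := hlow p hp
  have hBq : ‖A q‖ ≤ C * ‖q‖ := hhigh q hq
  have hppos : 0 < ‖p‖ := norm_pos_iff.mpr hpne
  have hAppos : 0 < ‖A p‖ := lt_of_lt_of_le (by positivity) hBp
  have hchain : ‖A q‖ < C * γ * ‖p‖ := by
    calc ‖A q‖ ≤ C * ‖q‖ := hBq
    _ < C * (γ * ‖p‖) := by exact mul_lt_mul_of_pos_left hcone hCpos
    _ = C * γ * ‖p‖ := by ring
  have hfactor : C * γ * ‖p‖ ≤ γ * Real.exp (-κ + δ / 4) * ‖A p‖ := by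
    have h1 : C * γ * ‖p‖ ≤ C * γ / c * ‖A p‖ := by
      rw [div_mul_eq_mul_div, le_div_iff₀ hcpos]
      calc C * γ * ‖p‖ * c = C * γ * (c * ‖p‖) := by ring
      _ ≤ C * γ * ‖A p‖ := by
          apply mul_le_mul_of_nonneg_left hBp (by positivity)
    refine le_trans h1 ?_
    apply mul_le_mul_of_nonneg_right _ (le_of_lt hAppos)
    rw [hc, hC, div_le_iff₀ (Real.exp_pos _)]
    have hexp : Real.exp (lam i₂ + δ / 4) ≤
        Real.exp (-κ + δ / 4) * Real.exp (lam i₁ - δ / 4) := by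
      rw [← Real.exp_add]
      exact Real.exp_le_exp.mpr (by linarith)
    calc Real.exp (lam i₂ + δ / 4) * γ
        ≤ Real.exp (-κ + δ / 4) * Real.exp (lam i₁ - δ / 4) * γ :=
          mul_le_mul_of_nonneg_right hexp (le_of_lt hγ)
    _ = γ * Real.exp (-κ + δ / 4) * Real.exp (lam i₁ - δ / 4) := by ring
  exact lt_of_lt_of_le hchain hfactor
end
end

section
/- Let ℝ^d = ⊕_{i=1}^k E^i be an orthogonal decomposition, λ'_1 > ... > λ'_k real numbers, κ := (1/2)min_i(λ'_i−λ'_{i+1}) and 0 < δ < κ/2. Then there exist γ > 0 and α_1 > 0 such that: for every sequence (A_n) of invertible linear maps preserving each E^i with ‖A_n|_{E^i}‖, ‖(A_n|_{E^i})⁻¹‖⁻¹ ∈ (e^{λ'_i − δ/4}, e^{λ'_i + δ/4}), and every sequence (C_n) in GL(d,ℝ) with ‖A_n − C_n‖ < α_1 for all n, writing A^{(n)} = A_n ··· A_1 and C^{(n)} = C_n ··· C_1, one has |(1/n)·log σ_i(A^{(n)}) − (1/n)·log σ_i(C^{(n)})| < δ for all n ≥ 1 and all i ∈ {1,...,d}.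 -/
noncomputable section

noncomputable def semiaxis {d : ℕ} (E : Set (Euc d)) (i : ℕ) : ℝ :=
  sInf {r : ℝ | ∃ V : Submodule ℝ (Euc d), Module.finrank ℝ V = d - i ∧
    ∀ v ∈ E ∩ (V : Set (Euc d)), ‖v‖ ≤ r}

noncomputable def sv {d : ℕ} (A : Euc d →L[ℝ] Euc d) (i : ℕ) : ℝ :=
  semiaxis (⇑A '' Metric.closedBall (0 : Euc d) 1) i

/-- `compSeq A n = A_n ∘ ... ∘ A_1`. -/
noncomputable def compSeq {d : ℕ} (A : ℕ → (Euc d →L[ℝ] Euc d)) : ℕ → (Euc d →L[ℝ] Euc d)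
  | 0 => ContinuousLinearMap.id ℝ (Euc d)
  | n + 1 => A (n + 1) ∘L compSeq A n

namespace SVP

variable {d k : ℕ}

/-! ### products of lists of operators -/

noncomputable def prodL : List (Euc d →L[ℝ] Euc d) → (Euc d →L[ℝ] Euc d)
  | [] => ContinuousLinearMap.id ℝ (Euc d)
  | B :: rest => prodL rest ∘L B

lemma prodL_append (L : List (Euc d →L[ℝ] Euc d)) (B : Euc d →L[ℝ] Euc d) :
    prodL (L ++ [B]) = B ∘L prodL L := by
  induction L with
  | nil => ext x; simp [prodL]
  | cons X rest ih => ext x; simp [prodL, ih]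

lemma compSeq_eq_prodL (A : ℕ → (Euc d →L[ℝ] Euc d)) (n : ℕ) :
    compSeq A n = prodL ((List.range n).map fun m => A (m + 1)) := by
  induction n with
  | zero => rfl
  | succ n ih =>
    rw [List.range_succ, List.map_append]
    simp only [List.map_cons, List.map_nil]
    rw [prodL_append, compSeq, ih]

noncomputable def prodE : List (Euc d ≃L[ℝ] Euc d) → (Euc d ≃L[ℝ] Euc d)
  | [] => ContinuousLinearEquiv.refl ℝ (Euc d)
  | B :: rest => B.trans (prodE rest)

lemma prodE_coe (L : List (Euc d ≃L[ℝ] Euc d)) (x : Euc d) :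
    prodE L x = prodL (L.map ContinuousLinearEquiv.toContinuousLinearMap) x := by
  induction L generalizing x with
  | nil => rfl
  | cons X rest ih =>
    simp only [prodE, List.map_cons, prodL, ContinuousLinearMap.comp_apply,
      ContinuousLinearEquiv.trans_apply]
    rw [← ih]
    rfl

lemma prodE_append (L : List (Euc d ≃L[ℝ] Euc d)) (B : Euc d ≃L[ℝ] Euc d) :
    prodE (L ++ [B]) = (prodE L).trans B := by
  induction L with
  | nil => ext x; simp [prodE]
  | cons X rest ih => ext x; simp [prodE, ih]

lemma prodE_symm (L : List (Euc d ≃L[ℝ] Euc d)) :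
    (prodE L).symm = prodE ((L.map fun e => e.symm).reverse) := by
  induction L with
  | nil => rfl
  | cons X rest ih =>
    simp only [List.map_cons, List.reverse_cons, prodE, prodE_append]
    ext x; simp [← ih]

/-! ### orthogonal block machinery -/

lemma norm_sq_sum_of_orth (g : Fin k → Euc d)
    (h : ∀ i j, i ≠ j → (inner ℝ (g i) (g j) : ℝ) = 0) :
    ‖∑ i, g i‖ ^ 2 = ∑ i, ‖g i‖ ^ 2 := by
  classical
  have : ∀ (s : Finset (Fin k)), ‖∑ i ∈ s, g i‖ ^ 2 = ∑ i ∈ s, ‖g i‖ ^ 2 := by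
    intro s
    induction s using Finset.induction with
    | empty => simp
    | insert a s hna ih =>
      rw [Finset.sum_insert hna, Finset.sum_insert hna, norm_add_sq_real, ih]
      have : (inner ℝ (g a) (∑ i ∈ s, g i) : ℝ) = 0 := by
        rw [inner_sum]
        refine Finset.sum_eq_zero fun j hj => h a j ?_
        rintro rfl; exact hna hj
      rw [this]; ring
  exact this Finset.univ

variable (E : Fin k → Submodule ℝ (Euc d))

def blk (P : Fin k → Prop) : Submodule ℝ (Euc d) :=
  ⨆ i, ⨆ (_ : P i), E i

lemma le_blk (P : Fin k → Prop) {i : Fin k} (hi : P i) : E i ≤ blk E P :=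
  le_iSup_of_le i (le_iSup_of_le hi le_rfl)

lemma blk_decompose (P : Fin k → Prop) {x : Euc d} (hx : x ∈ blk E P) :
    ∃ g : Fin k → Euc d, (∀ i, P i → g i ∈ E i) ∧ (∀ i, ¬P i → g i = 0) ∧ x = ∑ i, g i := by
  classical
  rw [blk, Submodule.mem_iSup_iff_exists_finsupp] at hx
  obtain ⟨f, hf, hsum⟩ := hx
  refine ⟨fun i => f i, fun i hi => ?_, fun i hi => ?_, ?_⟩
  · have := hf i; rwa [iSup_pos hi] at this
  · have := hf i; rw [iSup_neg hi] at this; simpa using this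
  · rw [← hsum, Finsupp.sum_fintype]; intro; rfl

variable (horth : ∀ i j : Fin k, i ≠ j → ∀ v ∈ E i, ∀ w ∈ E j, (inner ℝ v w : ℝ) = 0)

include horth in
lemma parts_orth {g h : Fin k → Euc d} (hg : ∀ i, g i ∈ E i ∨ g i = 0)
    (hh : ∀ i, h i ∈ E i ∨ h i = 0) :
    ∀ i j, i ≠ j → (inner ℝ (g i) (h j) : ℝ) = 0 := by
  intro i j hij
  rcases hg i with hgi | hgi
  · rcases hh j with hhj | hhj
    · exact horth i j hij (g i) hgi (h j) hhj
    · simp [hhj]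
  · simp [hgi]

include horth in
lemma blk_norm_sq {x : Euc d}
    {g : Fin k → Euc d} (hg : ∀ i, g i ∈ E i ∨ g i = 0) (hx : x = ∑ i, g i) :
    ‖x‖ ^ 2 = ∑ i, ‖g i‖ ^ 2 := by
  rw [hx]
  exact norm_sq_sum_of_orth g (parts_orth E horth hg hg)

include horth in
lemma blk_norm_le (P : Fin k → Prop) (G : Euc d →L[ℝ] Euc d)
    (hGi : ∀ i, P i → ∀ v ∈ E i, G v ∈ E i) (c : ℝ) (hc : 0 ≤ c)
    (hb : ∀ i, P i → ∀ v ∈ E i, ‖G v‖ ≤ c * ‖v‖) :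
    ∀ x ∈ blk E P, ‖G x‖ ≤ c * ‖x‖ := by
  intro x hx
  obtain ⟨g, hgP, hgN, hxs⟩ := blk_decompose E P hx
  have hgor : ∀ i, g i ∈ E i ∨ g i = 0 := by
    intro i; by_cases hi : P i
    · exact Or.inl (hgP i hi)
    · exact Or.inr (hgN i hi)
  have hGor : ∀ i, G (g i) ∈ E i ∨ G (g i) = 0 := by
    intro i; by_cases hi : P i
    · exact Or.inl (hGi i hi _ (hgP i hi))
    · right; rw [hgN i hi]; simp
  have hx2 : ‖x‖ ^ 2 = ∑ i, ‖g i‖ ^ 2 := blk_norm_sq E horth hgor hxs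
  have hGx2 : ‖G x‖ ^ 2 = ∑ i, ‖G (g i)‖ ^ 2 := by
    have : G x = ∑ i, G (g i) := by rw [hxs, map_sum]
    exact blk_norm_sq E horth hGor this
  have key : ‖G x‖ ^ 2 ≤ (c * ‖x‖) ^ 2 := by
    rw [hGx2, mul_pow, hx2, Finset.mul_sum]
    refine Finset.sum_le_sum fun i _ => ?_
    rw [← mul_pow]
    by_cases hi : P i
    · exact pow_le_pow_left₀ (norm_nonneg _) (hb i hi _ (hgP i hi)) 2
    · rw [hgN i hi]; simp
  exact (pow_le_pow_iff_left₀ (norm_nonneg _) (by positivity) two_ne_zero).1 key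

include horth in
lemma blk_norm_ge (P : Fin k → Prop) (G : Euc d →L[ℝ] Euc d)
    (hGi : ∀ i, P i → ∀ v ∈ E i, G v ∈ E i) (c : ℝ) (hc : 0 ≤ c)
    (hb : ∀ i, P i → ∀ v ∈ E i, c * ‖v‖ ≤ ‖G v‖) :
    ∀ x ∈ blk E P, c * ‖x‖ ≤ ‖G x‖ := by
  intro x hx
  obtain ⟨g, hgP, hgN, hxs⟩ := blk_decompose E P hx
  have hgor : ∀ i, g i ∈ E i ∨ g i = 0 := by
    intro i; by_cases hi : P i
    · exact Or.inl (hgP i hi)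
    · exact Or.inr (hgN i hi)
  have hGor : ∀ i, G (g i) ∈ E i ∨ G (g i) = 0 := by
    intro i; by_cases hi : P i
    · exact Or.inl (hGi i hi _ (hgP i hi))
    · right; rw [hgN i hi]; simp
  have hx2 : ‖x‖ ^ 2 = ∑ i, ‖g i‖ ^ 2 := blk_norm_sq E horth hgor hxs
  have hGx2 : ‖G x‖ ^ 2 = ∑ i, ‖G (g i)‖ ^ 2 := by
    have : G x = ∑ i, G (g i) := by rw [hxs, map_sum]
    exact blk_norm_sq E horth hGor this
  have key : (c * ‖x‖) ^ 2 ≤ ‖G x‖ ^ 2 := by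
    rw [hGx2, mul_pow, hx2, Finset.mul_sum]
    refine Finset.sum_le_sum fun i _ => ?_
    rw [← mul_pow]
    by_cases hi : P i
    · exact pow_le_pow_left₀ (by positivity) (hb i hi _ (hgP i hi)) 2
    · rw [hgN i hi]; simp
  exact (pow_le_pow_iff_left₀ (by positivity) (norm_nonneg _) two_ne_zero).1 key

lemma blk_invariant (P : Fin k → Prop) (G : Euc d →L[ℝ] Euc d)
    (hGi : ∀ i, P i → ∀ v ∈ E i, G v ∈ E i) :
    ∀ x ∈ blk E P, G x ∈ blk E P := by
  intro x hx
  obtain ⟨g, hgP, hgN, hxs⟩ := blk_decompose E P hx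
  rw [hxs, map_sum]
  refine Submodule.sum_mem _ fun i _ => ?_
  by_cases hi : P i
  · exact le_blk E P hi (hGi i hi _ (hgP i hi))
  · rw [hgN i hi]; simp

include horth in
lemma blk_orth (P Q : Fin k → Prop)
    (hPQ : ∀ i, ¬(P i ∧ Q i)) :
    ∀ x ∈ blk E P, ∀ y ∈ blk E Q, (inner ℝ x y : ℝ) = 0 := by
  intro x hx y hy
  obtain ⟨g, hgP, hgN, hxs⟩ := blk_decompose E P hx
  obtain ⟨h, hhQ, hhN, hys⟩ := blk_decompose E Q hy
  rw [hxs, hys, sum_inner]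
  refine Finset.sum_eq_zero fun i _ => ?_
  rw [inner_sum]
  refine Finset.sum_eq_zero fun j _ => ?_
  by_cases hij : i = j
  · subst hij
    by_cases hi : P i
    · have : ¬ Q i := fun hq => hPQ i ⟨hi, hq⟩
      rw [hhN i this]; simp
    · rw [hgN i hi]; simp
  · by_cases hi : P i
    · by_cases hj : Q j
      · exact horth i j hij _ (hgP i hi) _ (hhQ j hj)
      · rw [hhN j hj]; simp
    · rw [hgN i hi]; simp

variable (hspan : (⨆ i, E i) = ⊤)

include hspan in
lemma blk_sup_compl (P : Fin k → Prop) :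
    blk E P ⊔ blk E (fun i => ¬ P i) = ⊤ := by
  rw [eq_top_iff, ← hspan]
  refine iSup_le fun i => ?_
  by_cases hi : P i
  · exact le_trans (le_blk E P hi) le_sup_left
  · exact le_trans (le_blk E (fun i => ¬ P i) hi) le_sup_right

include horth hspan in
lemma blk_compl_eq_orthogonal (P : Fin k → Prop) :
    blk E (fun i => ¬ P i) = (blk E P)ᗮ := by
  have hle : blk E (fun i => ¬ P i) ≤ (blk E P)ᗮ := by
    intro y hy
    rw [Submodule.mem_orthogonal]
    intro x hx
    exact blk_orth E horth P (fun i => ¬ P i) (fun i h => h.2 h.1) x hx y hy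
  refine Submodule.eq_of_le_of_finrank_le hle ?_
  have h1 : Module.finrank ℝ (blk E P) + Module.finrank ℝ ((blk E P)ᗮ) = d := by
    simpa using Submodule.finrank_add_finrank_orthogonal (K := blk E P)
  have h2 : d ≤ Module.finrank ℝ (blk E P) + Module.finrank ℝ (blk E (fun i => ¬ P i)) := by
    have := Submodule.finrank_sup_add_finrank_inf_eq (blk E P) (blk E (fun i => ¬ P i))
    rw [blk_sup_compl E hspan P] at this
    have htop : Module.finrank ℝ (⊤ : Submodule ℝ (Euc d)) = d := by simp
    omega
  omega

include hspan in
lemma blk_true : blk E (fun _ => True) = ⊤ := by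
  rw [eq_top_iff, ← hspan]
  exact iSup_le fun i => le_blk E _ trivial

/-! ### sv criteria -/

lemma exists_sub_finrank (F : Submodule ℝ (Euc d)) (m : ℕ) (h : m ≤ Module.finrank ℝ F) :
    ∃ W : Submodule ℝ (Euc d), W ≤ F ∧ Module.finrank ℝ W = m := by
  obtain ⟨f, hf⟩ := exists_linearIndependent_of_le_finrank (R := ℝ) (M := F) h
  refine ⟨(Submodule.span ℝ (Set.range f)).map F.subtype, Submodule.map_subtype_le _ _, ?_⟩
  rw [Submodule.finrank_map_subtype_eq, finrank_span_eq_card hf]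
  simp

lemma zero_mem_image_ball (X : Euc d →L[ℝ] Euc d) :
    (0 : Euc d) ∈ ⇑X '' Metric.closedBall (0 : Euc d) 1 :=
  ⟨0, by simp, by simp⟩

lemma sv_bddBelow (X : Euc d →L[ℝ] Euc d) (i : ℕ) :
    BddBelow {r : ℝ | ∃ V : Submodule ℝ (Euc d), Module.finrank ℝ V = d - i ∧
      ∀ v ∈ (⇑X '' Metric.closedBall (0 : Euc d) 1) ∩ (V : Set (Euc d)), ‖v‖ ≤ r} := by
  refine ⟨0, fun s hs => ?_⟩
  obtain ⟨V, _, hVb⟩ := hs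
  simpa using hVb 0 ⟨zero_mem_image_ball X, Submodule.zero_mem V⟩

lemma sv_le (X : Euc d ≃L[ℝ] Euc d) (i : ℕ) (V' : Submodule ℝ (Euc d))
    (hdim : Module.finrank ℝ V' = d - i) (r : ℝ) (hr : 0 ≤ r)
    (h : ∀ u ∈ V', ‖X u‖ ≤ r * ‖u‖) :
    sv (X : Euc d →L[ℝ] Euc d) i ≤ r := by
  apply csInf_le (sv_bddBelow _ i)
  refine ⟨V'.map (X.toLinearEquiv : Euc d →ₗ[ℝ] Euc d), ?_, ?_⟩
  · rw [LinearEquiv.finrank_map_eq]; exact hdim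
  · rintro v ⟨⟨u, hu, rfl⟩, hv⟩
    obtain ⟨u', hu', hXu⟩ := hv
    have huu : u' = u := by
      apply X.injective
      exact hXu
    subst huu
    calc ‖(X : Euc d →L[ℝ] Euc d) u'‖ = ‖X u'‖ := rfl
      _ ≤ r * ‖u'‖ := h u' hu'
      _ ≤ r * 1 := by
          have : ‖u'‖ ≤ 1 := by simpa [Metric.mem_closedBall, dist_zero_right] using hu
          exact mul_le_mul_of_nonneg_left this hr
      _ = r := mul_one r

lemma sv_ge (X : Euc d ≃L[ℝ] Euc d) (i : ℕ) (hi : i < d) (W : Submodule ℝ (Euc d))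
    (hdim : Module.finrank ℝ W = i + 1) (r : ℝ)
    (h : ∀ w ∈ W, r * ‖w‖ ≤ ‖X w‖) :
    r ≤ sv (X : Euc d →L[ℝ] Euc d) i := by
  apply le_csInf
  · obtain ⟨V₀, _, hV₀⟩ := exists_sub_finrank (⊤ : Submodule ℝ (Euc d)) (d - i)
      (by simp [Submodule.finrank_le])
    refine ⟨‖(X : Euc d →L[ℝ] Euc d)‖, V₀, hV₀, ?_⟩
    rintro v ⟨⟨u, hu, rfl⟩, -⟩
    have : ‖u‖ ≤ 1 := by simpa [Metric.mem_closedBall, dist_zero_right] using hu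
    calc ‖(X : Euc d →L[ℝ] Euc d) u‖ ≤ ‖(X : Euc d →L[ℝ] Euc d)‖ * ‖u‖ :=
          (X : Euc d →L[ℝ] Euc d).le_opNorm u
      _ ≤ ‖(X : Euc d →L[ℝ] Euc d)‖ * 1 := by
          exact mul_le_mul_of_nonneg_left this (norm_nonneg _)
      _ = _ := mul_one _
  · rintro s ⟨V, hV, hVb⟩
    set U : Submodule ℝ (Euc d) := V.map (X.symm.toLinearEquiv : Euc d →ₗ[ℝ] Euc d) with hU
    have hUdim : Module.finrank ℝ U = d - i := by
      rw [hU, LinearEquiv.finrank_map_eq]; exact hV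
    have hbot : U ⊓ W ≠ ⊥ := by
      intro hb
      have := Submodule.finrank_sup_add_finrank_inf_eq U W
      rw [hb] at this
      have h1 : Module.finrank ℝ (U ⊔ W : Submodule ℝ (Euc d)) ≤ d := by
        simpa using Submodule.finrank_le (U ⊔ W)
      have h2 : Module.finrank ℝ (⊥ : Submodule ℝ (Euc d)) = 0 := finrank_bot ℝ (Euc d)
      omega
    obtain ⟨x, hxm, hx0⟩ := Submodule.exists_mem_ne_zero_of_ne_bot hbot
    set w : Euc d := ‖x‖⁻¹ • x with hw
    have hwW : w ∈ W := Submodule.smul_mem _ _ hxm.2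
    have hwU : w ∈ U := Submodule.smul_mem _ _ hxm.1
    have hwn : ‖w‖ = 1 := norm_smul_inv_norm hx0
    have hXwV : X w ∈ V := by
      obtain ⟨v', hv', hvw⟩ := hwU
      have : X w = v' := by
        rw [← hvw]
        exact X.apply_symm_apply v'
      rw [this]; exact hv'
    have hmem : (X : Euc d →L[ℝ] Euc d) w ∈
        (⇑(X : Euc d →L[ℝ] Euc d) '' Metric.closedBall (0 : Euc d) 1) ∩ (V : Set (Euc d)) := by
      constructor
      · exact ⟨w, by simp [Metric.mem_closedBall, dist_zero_right, hwn], rfl⟩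
      · exact hXwV
    calc r = r * ‖w‖ := by rw [hwn, mul_one]
      _ ≤ ‖X w‖ := h w hwW
      _ ≤ s := hVb _ hmem

/-! ### cone lemma -/

open Submodule in
lemma cone_lemma (F : Submodule ℝ (Euc d)) (a b ε : ℝ) (hb : 0 ≤ b) (hε : 0 ≤ ε)
    (hab : b + 6 * ε ≤ a)
    (L : List (Euc d →L[ℝ] Euc d))
    (hL : ∀ B ∈ L, ∃ G : Euc d →L[ℝ] Euc d,
      (∀ x ∈ F, G x ∈ F) ∧ (∀ y ∈ Fᗮ, G y ∈ Fᗮ) ∧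
      (∀ x ∈ F, a * ‖x‖ ≤ ‖G x‖) ∧ (∀ y ∈ Fᗮ, ‖G y‖ ≤ b * ‖y‖) ∧
      ‖B - G‖ ≤ ε) :
    ∀ w ∈ F, (a - 2 * ε) ^ L.length * ‖w‖ ≤ ‖prodL L w‖ := by
  have ha2 : 0 ≤ a - 2 * ε := by linarith
  have hPnorm : ∀ u : Euc d, ‖(orthogonalProjection F u : Euc d)‖ ≤ ‖u‖ := by
    intro u
    calc ‖(orthogonalProjection F u : Euc d)‖
        ≤ ‖(orthogonalProjection F : Euc d →L[ℝ] F)‖ * ‖u‖ := (orthogonalProjection F).le_opNorm u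
      _ ≤ 1 * ‖u‖ := by
          exact mul_le_mul_of_nonneg_right (orthogonalProjectionOnto_norm_le F) (norm_nonneg _)
      _ = ‖u‖ := one_mul _
  have key : ∀ (L' : List (Euc d →L[ℝ] Euc d)),
      (∀ B ∈ L', ∃ G : Euc d →L[ℝ] Euc d,
        (∀ x ∈ F, G x ∈ F) ∧ (∀ y ∈ Fᗮ, G y ∈ Fᗮ) ∧
        (∀ x ∈ F, a * ‖x‖ ≤ ‖G x‖) ∧ (∀ y ∈ Fᗮ, ‖G y‖ ≤ b * ‖y‖) ∧
        ‖B - G‖ ≤ ε) →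
      ∀ v : Euc d, ‖v - (orthogonalProjection F v : Euc d)‖ ≤ ‖(orthogonalProjection F v : Euc d)‖ →
      (a - 2 * ε) ^ L'.length * ‖(orthogonalProjection F v : Euc d)‖
          ≤ ‖(orthogonalProjection F (prodL L' v) : Euc d)‖ ∧
        ‖prodL L' v - (orthogonalProjection F (prodL L' v) : Euc d)‖
          ≤ ‖(orthogonalProjection F (prodL L' v) : Euc d)‖ := by
    intro L'
    induction L' with
    | nil =>
      intro _ v hv
      exact ⟨by simp [prodL], by simpa [prodL] using hv⟩
    | cons B rest ih =>
      intro hL' v hv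
      obtain ⟨G, hGF, hGS, hGa, hGb, hGe⟩ := hL' B List.mem_cons_self
      set x : Euc d := (orthogonalProjection F v : Euc d) with hxdef
      set y : Euc d := v - x with hydef
      have hxF : x ∈ F := (orthogonalProjection F v).2
      have hyS : y ∈ Fᗮ := sub_starProjection_mem_orthogonal v
      have hvxy : v = x + y := by rw [hydef]; abel
      have hvn : ‖v‖ ≤ 2 * ‖x‖ := by
        calc ‖v‖ = ‖x + y‖ := by rw [← hvxy]
          _ ≤ ‖x‖ + ‖y‖ := norm_add_le x y
          _ ≤ ‖x‖ + ‖x‖ := by exact add_le_add_right hv _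
          _ = 2 * ‖x‖ := by ring
      set e : Euc d := B v - G v with hedef
      have hen : ‖e‖ ≤ 2 * ε * ‖x‖ := by
        have h1 : ‖e‖ ≤ ε * ‖v‖ := by
          calc ‖e‖ = ‖(B - G) v‖ := by rw [hedef]; simp
            _ ≤ ‖B - G‖ * ‖v‖ := (B - G).le_opNorm v
            _ ≤ ε * ‖v‖ := mul_le_mul_of_nonneg_right hGe (norm_nonneg _)
        calc ‖e‖ ≤ ε * ‖v‖ := h1
          _ ≤ ε * (2 * ‖x‖) := mul_le_mul_of_nonneg_left hvn hε
          _ = 2 * ε * ‖x‖ := by ring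
      have hBv : B v = G x + (G y + e) := by
        rw [hedef, hvxy]; simp; abel
      have hPGx : (orthogonalProjection F (G x) : Euc d) = G x :=
        starProjection_eq_self_iff.2 (hGF x hxF)
      have hPGy : (orthogonalProjection F (G y) : Euc d) = 0 := by
        have := orthogonalProjectionOnto_apply_of_mem_orthogonal (K := F) (hGS y hyS)
        simpa using congrArg (Subtype.val) this
      have hPBv : (orthogonalProjection F (B v) : Euc d)
          = G x + (orthogonalProjection F e : Euc d) := by
        rw [hBv]
        push_cast [map_add]
        rw [hPGx, hPGy, zero_add]
      have hPe : ‖(orthogonalProjection F e : Euc d)‖ ≤ 2 * ε * ‖x‖ :=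
        le_trans (hPnorm e) hen
      have hx' : (a - 2 * ε) * ‖x‖ ≤ ‖(orthogonalProjection F (B v) : Euc d)‖ := by
        rw [hPBv]
        calc (a - 2*ε) * ‖x‖ = a * ‖x‖ - 2 * ε * ‖x‖ := by ring
          _ ≤ ‖G x‖ - ‖(orthogonalProjection F e : Euc d)‖ := by
              have := hGa x hxF
              have h2 := hPe
              linarith
          _ ≤ ‖G x + (orthogonalProjection F e : Euc d)‖ := by
              have h3 : ‖G x‖ ≤ ‖G x + (orthogonalProjection F e : Euc d)‖
                  + ‖(orthogonalProjection F e : Euc d)‖ := by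
                calc ‖G x‖ = ‖(G x + (orthogonalProjection F e : Euc d))
                    - (orthogonalProjection F e : Euc d)‖ := by rw [add_sub_cancel_right]
                  _ ≤ _ := norm_sub_le _ _
              linarith
      have hy' : ‖B v - (orthogonalProjection F (B v) : Euc d)‖
          ≤ ‖(orthogonalProjection F (B v) : Euc d)‖ := by
        have hrest : B v - (orthogonalProjection F (B v) : Euc d)
            = G y + (e - (orthogonalProjection F e : Euc d)) := by
          rw [hPBv, hBv]; abel
        have h1 : ‖B v - (orthogonalProjection F (B v) : Euc d)‖
            ≤ b * ‖y‖ + 4 * ε * ‖x‖ := by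
          rw [hrest]
          calc ‖G y + (e - (orthogonalProjection F e : Euc d))‖
              ≤ ‖G y‖ + ‖e - (orthogonalProjection F e : Euc d)‖ := norm_add_le _ _
            _ ≤ b * ‖y‖ + (‖e‖ + ‖(orthogonalProjection F e : Euc d)‖) := by
                have := hGb y hyS
                have := norm_sub_le e ((orthogonalProjection F e : Euc d))
                gcongr
            _ ≤ b * ‖y‖ + 4 * ε * ‖x‖ := by
                have := hen; have := hPe; linarith
        have h2 : b * ‖y‖ + 4 * ε * ‖x‖ ≤ (a - 2 * ε) * ‖x‖ := by
          have hyx : ‖y‖ ≤ ‖x‖ := hv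
          have hby : b * ‖y‖ ≤ b * ‖x‖ := mul_le_mul_of_nonneg_left hyx hb
          have hx0 : (0:ℝ) ≤ ‖x‖ := norm_nonneg _
          nlinarith [mul_le_mul_of_nonneg_right (show b + 4*ε ≤ a - 2*ε by linarith) hx0]
        exact le_trans h1 (le_trans h2 hx')
      have hstep := ih (fun B hB => hL' B (List.mem_cons_of_mem _ hB)) (B v) hy'
      constructor
      · calc (a - 2*ε) ^ (B :: rest).length * ‖x‖
            = (a - 2*ε) ^ rest.length * ((a - 2*ε) * ‖x‖) := by
              rw [List.length_cons, pow_succ]; ring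
          _ ≤ (a - 2*ε) ^ rest.length * ‖(orthogonalProjection F (B v) : Euc d)‖ := by
              exact mul_le_mul_of_nonneg_left hx' (by positivity)
          _ ≤ ‖(orthogonalProjection F (prodL (B :: rest) v) : Euc d)‖ := by
              have := hstep.1
              simpa [prodL] using this
      · have := hstep.2
        simpa [prodL] using this
  intro w hw
  have hPw : (orthogonalProjection F w : Euc d) = w :=
    starProjection_eq_self_iff.2 hw
  have h0 := key L hL w (by rw [hPw]; simp)
  calc (a - 2*ε) ^ L.length * ‖w‖
      = (a - 2*ε) ^ L.length * ‖(orthogonalProjection F w : Euc d)‖ := by rw [hPw]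
    _ ≤ ‖(orthogonalProjection F (prodL L w) : Euc d)‖ := h0.1
    _ ≤ ‖prodL L w‖ := hPnorm _

/-! ### master lemma -/

include horth hspan in
lemma master
    (lam : Fin k → ℝ) (hlam : StrictAnti lam) (κ δ : ℝ)
    (hκpos : 0 < κ)
    (hgap : ∀ t : Fin k, ∀ ht : (t:ℕ)+1 < k, 2*κ ≤ lam t - lam ⟨(t:ℕ)+1, ht⟩)
    (hδ : 0 < δ) (hδκ : δ ≤ κ)
    (A D : ℕ → (Euc d ≃L[ℝ] Euc d))
    (hAinv : ∀ n (j : Fin k), ∀ v ∈ E j, A n v ∈ E j)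
    (hAlow : ∀ n (j : Fin k), ∀ v ∈ E j, Real.exp (lam j - δ/4) * ‖v‖ ≤ ‖A n v‖)
    (hAup  : ∀ n (j : Fin k), ∀ v ∈ E j, ‖A n v‖ ≤ Real.exp (lam j + δ/4) * ‖v‖)
    (εf εi : ℝ) (hεf0 : 0 ≤ εf) (hεi0 : 0 ≤ εi)
    (hεfb : ∀ t : Fin k, 6 * εf ≤ (1 - Real.exp (-κ)) * Real.exp (lam t - δ/4)
        ∧ 2 * εf ≤ (1 - Real.exp (-(δ/8))) * Real.exp (lam t - δ/4))
    (hεib : ∀ t : Fin k, 6 * εi ≤ (1 - Real.exp (-κ)) * Real.exp (-lam t - δ/4)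
        ∧ 2 * εi ≤ (1 - Real.exp (-(δ/8))) * Real.exp (-lam t - δ/4))
    (hDf : ∀ m, ‖((D m : Euc d →L[ℝ] Euc d)) - ((A m : Euc d →L[ℝ] Euc d))‖ ≤ εf)
    (hDi : ∀ m, ‖(((D m).symm : Euc d →L[ℝ] Euc d)) - (((A m).symm : Euc d →L[ℝ] Euc d))‖ ≤ εi)
    (n : ℕ) (i : Fin d) (t : Fin k)
    (ht1 : Module.finrank ℝ (blk E (fun j : Fin k => (j:ℕ) < (t:ℕ))) ≤ (i:ℕ))
    (ht2 : (i:ℕ) < Module.finrank ℝ (blk E (fun j : Fin k => (j:ℕ) < (t:ℕ)+1))) :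
    Real.exp ((n:ℝ) * (lam t - 3*δ/8)) ≤ sv (compSeq (fun m => (D m : Euc d →L[ℝ] Euc d)) n) i
    ∧ sv (compSeq (fun m => (D m : Euc d →L[ℝ] Euc d)) n) i
        ≤ Real.exp ((n:ℝ) * (lam t + 3*δ/8)) := by
  classical
  have hexp : ∀ x : ℝ, (0:ℝ) < Real.exp x := fun x => Real.exp_pos x
  have hid : (i:ℕ) < d := i.isLt
  -- facts about the inverses
  have hAsymm_inv : ∀ m (j : Fin k), ∀ v ∈ E j, (A m).symm v ∈ E j := by
    intro m j v hv
    have hmap : (E j).map ((A m).toLinearEquiv : Euc d →ₗ[ℝ] Euc d) = E j := by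
      apply Submodule.eq_of_le_of_finrank_le
      · rintro _ ⟨u, hu, rfl⟩
        exact hAinv m j u hu
      · rw [LinearEquiv.finrank_map_eq]
    rw [← hmap] at hv
    obtain ⟨u, hu, huv⟩ := hv
    have hsy : (A m).symm v = u := by
      have : v = A m u := by rw [← huv]; rfl
      rw [this]; exact (A m).symm_apply_apply u
    rwa [hsy]
  have hAsymm_up : ∀ m (j : Fin k), ∀ v ∈ E j,
      ‖(A m).symm v‖ ≤ Real.exp (-lam j + δ/4) * ‖v‖ := by
    intro m j v hv
    have hu := hAsymm_inv m j v hv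
    have h1 := hAlow m j _ hu
    rw [(A m).apply_symm_apply] at h1
    have h3 : ‖(A m).symm v‖ * Real.exp (lam j - δ/4) ≤ ‖v‖ := by linarith [h1]
    have h4 : ‖(A m).symm v‖ ≤ ‖v‖ / Real.exp (lam j - δ/4) := (le_div_iff₀ (hexp _)).2 h3
    calc ‖(A m).symm v‖ ≤ ‖v‖ / Real.exp (lam j - δ/4) := h4
      _ = Real.exp (-lam j + δ/4) * ‖v‖ := by
          rw [div_eq_inv_mul, ← Real.exp_neg]
          have : -(lam j - δ/4) = -lam j + δ/4 := by ring
          rw [this]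
  have hAsymm_low : ∀ m (j : Fin k), ∀ v ∈ E j,
      Real.exp (-lam j - δ/4) * ‖v‖ ≤ ‖(A m).symm v‖ := by
    intro m j v hv
    have hu := hAsymm_inv m j v hv
    have h1 := hAup m j _ hu
    rw [(A m).apply_symm_apply] at h1
    have h2 : Real.exp (-lam j - δ/4) * ‖v‖
        ≤ Real.exp (-lam j - δ/4) * (Real.exp (lam j + δ/4) * ‖(A m).symm v‖) :=
      mul_le_mul_of_nonneg_left h1 (le_of_lt (hexp _))
    calc Real.exp (-lam j - δ/4) * ‖v‖
        ≤ Real.exp (-lam j - δ/4) * (Real.exp (lam j + δ/4) * ‖(A m).symm v‖) := h2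
      _ = ‖(A m).symm v‖ := by
          rw [← mul_assoc, ← Real.exp_add,
            show -lam j - δ/4 + (lam j + δ/4) = 0 by ring, Real.exp_zero, one_mul]
  set DC : ℕ → (Euc d →L[ℝ] Euc d) := fun m => (D m : Euc d →L[ℝ] Euc d) with hDC
  set K : List (Euc d ≃L[ℝ] Euc d) := (List.range n).map (fun m => D (m+1)) with hK
  have hLprod : prodL (K.map ContinuousLinearEquiv.toContinuousLinearMap) = compSeq DC n := by
    rw [compSeq_eq_prodL, hK, List.map_map]
    rfl
  have hXeq : compSeq DC n = ((prodE K : Euc d ≃L[ℝ] Euc d) : Euc d →L[ℝ] Euc d) := by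
    refine ContinuousLinearMap.ext fun x => ?_
    rw [← hLprod, ← prodE_coe]
    rfl
  constructor
  -- LOWER BOUND
  · set P : Fin k → Prop := fun j => (j:ℕ) < (t:ℕ)+1 with hP
    set F := blk E P with hF
    have hFperp : blk E (fun j => ¬ P j) = Fᗮ := blk_compl_eq_orthogonal E horth hspan P
    set a := Real.exp (lam t - δ/4) with ha
    set b := Real.exp (-κ) * a with hbdef
    have hb0 : (0:ℝ) ≤ b := by positivity
    have hba : b + 6*εf ≤ a := by
      have h6 := (hεfb t).1
      have hbb : b = a - (1 - Real.exp (-κ)) * a := by rw [hbdef]; ring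
      rw [hbb]; rw [ha] at *; linarith
    have ht2' : (i:ℕ)+1 ≤ Module.finrank ℝ F := ht2
    obtain ⟨W, hWF, hWrank⟩ := exists_sub_finrank F ((i:ℕ)+1) ht2'
    set L : List (Euc d →L[ℝ] Euc d) := K.map ContinuousLinearEquiv.toContinuousLinearMap with hL
    have hLlen : L.length = n := by simp [hL, hK]
    have hyp : ∀ B ∈ L, ∃ G : Euc d →L[ℝ] Euc d,
        (∀ x ∈ F, G x ∈ F) ∧ (∀ y ∈ Fᗮ, G y ∈ Fᗮ) ∧
        (∀ x ∈ F, a * ‖x‖ ≤ ‖G x‖) ∧ (∀ y ∈ Fᗮ, ‖G y‖ ≤ b * ‖y‖) ∧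
        ‖B - G‖ ≤ εf := by
      intro B hB
      rw [hL, List.mem_map] at hB
      obtain ⟨e, heK, rfl⟩ := hB
      rw [hK, List.mem_map] at heK
      obtain ⟨m, hm, rfl⟩ := heK
      refine ⟨((A (m+1) : Euc d →L[ℝ] Euc d)), ?_, ?_, ?_, ?_, ?_⟩
      · exact blk_invariant E P _ (fun j _ v hv => hAinv (m+1) j v hv)
      · rw [← hFperp]
        exact blk_invariant E _ _ (fun j _ v hv => hAinv (m+1) j v hv)
      · refine blk_norm_ge E horth P _ (fun j _ v hv => hAinv (m+1) j v hv) a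
          (le_of_lt (hexp _)) ?_
        intro j hj v hv
        have hjt : j ≤ t := by
          rw [Fin.le_def]
          have : (j:ℕ) < (t:ℕ)+1 := hj
          omega
        have hlj : lam t ≤ lam j := hlam.antitone hjt
        calc a * ‖v‖ ≤ Real.exp (lam j - δ/4) * ‖v‖ := by
              apply mul_le_mul_of_nonneg_right _ (norm_nonneg v)
              rw [ha]; exact Real.exp_le_exp.2 (by linarith)
          _ ≤ ‖A (m+1) v‖ := hAlow (m+1) j v hv
      · rw [← hFperp]
        refine blk_norm_le E horth _ _ (fun j _ v hv => hAinv (m+1) j v hv) b hb0 ?_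
        intro j hj v hv
        have hj1 : (t:ℕ)+1 ≤ (j:ℕ) := by
          have : ¬ ((j:ℕ) < (t:ℕ)+1) := hj
          omega
        have hk1 : (t:ℕ)+1 < k := lt_of_le_of_lt hj1 j.isLt
        have hjt' : (⟨(t:ℕ)+1, hk1⟩ : Fin k) ≤ j := by rw [Fin.le_def]; exact hj1
        have h1 : lam j ≤ lam ⟨(t:ℕ)+1, hk1⟩ := hlam.antitone hjt'
        have h2 : 2*κ ≤ lam t - lam ⟨(t:ℕ)+1, hk1⟩ := hgap t hk1
        calc ‖A (m+1) v‖ ≤ Real.exp (lam j + δ/4) * ‖v‖ := hAup (m+1) j v hv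
          _ ≤ b * ‖v‖ := by
              apply mul_le_mul_of_nonneg_right _ (norm_nonneg v)
              rw [hbdef, ha, ← Real.exp_add]
              exact Real.exp_le_exp.2 (by linarith)
      · exact hDf (m+1)
    have hcone := cone_lemma F a b εf hb0 hεf0 hba L hyp
    have h2 : Real.exp (lam t - 3*δ/8) ≤ a - 2*εf := by
      have h2e := (hεfb t).2
      have heq : Real.exp (lam t - 3*δ/8) = Real.exp (-(δ/8)) * a := by
        rw [ha, ← Real.exp_add]; congr 1; ring
      rw [heq]; rw [ha] at *; linarith
    rw [hXeq]
    refine sv_ge (prodE K) i hid W hWrank _ ?_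
    intro w hw
    have h1 := hcone w (hWF hw)
    rw [hLlen] at h1
    have h3 : Real.exp (lam t - 3*δ/8) ^ n ≤ (a - 2*εf)^n :=
      pow_le_pow_left₀ (le_of_lt (hexp _)) h2 n
    have h4 : prodL L w = prodE K w := by rw [hL, ← prodE_coe]
    calc Real.exp ((n:ℝ) * (lam t - 3*δ/8)) * ‖w‖
        = Real.exp (lam t - 3*δ/8) ^ n * ‖w‖ := by rw [Real.exp_nat_mul]
      _ ≤ (a - 2*εf)^n * ‖w‖ := mul_le_mul_of_nonneg_right h3 (norm_nonneg _)
      _ ≤ ‖prodL L w‖ := h1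
      _ = ‖prodE K w‖ := by rw [h4]
  -- UPPER BOUND
  · set P : Fin k → Prop := fun j => (j:ℕ) < (t:ℕ) with hP
    set F' := blk E (fun j => ¬ P j) with hF'
    have hF'eq : F' = (blk E P)ᗮ := blk_compl_eq_orthogonal E horth hspan P
    have hF'perp : F'ᗮ = blk E P := by
      rw [hF'eq, Submodule.orthogonal_orthogonal]
    set a' := Real.exp (-lam t - δ/4) with ha'
    set b' := Real.exp (-κ) * a' with hb'def
    have hb'0 : (0:ℝ) ≤ b' := by positivity
    have hba' : b' + 6*εi ≤ a' := by
      have h6 := (hεib t).1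
      have hbb : b' = a' - (1 - Real.exp (-κ)) * a' := by rw [hb'def]; ring
      rw [hbb]; rw [ha'] at *; linarith
    have ht1' : Module.finrank ℝ (blk E P) ≤ (i:ℕ) := ht1
    have hrankF' : d - (i:ℕ) ≤ Module.finrank ℝ F' := by
      have h1 : Module.finrank ℝ (blk E P) + Module.finrank ℝ ((blk E P)ᗮ) = d := by
        simpa using Submodule.finrank_add_finrank_orthogonal (K := blk E P)
      rw [hF'eq]
      omega
    obtain ⟨W', hW'F, hW'rank⟩ := exists_sub_finrank F' (d - (i:ℕ)) hrankF'
    set Ksymm : List (Euc d ≃L[ℝ] Euc d) := (K.map fun e => e.symm).reverse with hKsymm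
    set L' : List (Euc d →L[ℝ] Euc d) := Ksymm.map ContinuousLinearEquiv.toContinuousLinearMap
      with hL'
    have hL'len : L'.length = n := by simp [hL', hKsymm, hK]
    have hyp : ∀ B ∈ L', ∃ G : Euc d →L[ℝ] Euc d,
        (∀ x ∈ F', G x ∈ F') ∧ (∀ y ∈ F'ᗮ, G y ∈ F'ᗮ) ∧
        (∀ x ∈ F', a' * ‖x‖ ≤ ‖G x‖) ∧ (∀ y ∈ F'ᗮ, ‖G y‖ ≤ b' * ‖y‖) ∧
        ‖B - G‖ ≤ εi := by
      intro B hB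
      rw [hL', List.mem_map] at hB
      obtain ⟨e, heK, rfl⟩ := hB
      rw [hKsymm, List.mem_reverse, List.mem_map] at heK
      obtain ⟨e', he'K, rfl⟩ := heK
      rw [hK, List.mem_map] at he'K
      obtain ⟨m, hm, rfl⟩ := he'K
      refine ⟨(((A (m+1)).symm : Euc d →L[ℝ] Euc d)), ?_, ?_, ?_, ?_, ?_⟩
      · exact blk_invariant E _ _ (fun j _ v hv => hAsymm_inv (m+1) j v hv)
      · rw [hF'perp]
        exact blk_invariant E P _ (fun j _ v hv => hAsymm_inv (m+1) j v hv)
      · refine blk_norm_ge E horth _ _ (fun j _ v hv => hAsymm_inv (m+1) j v hv) a'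
          (le_of_lt (hexp _)) ?_
        intro j hj v hv
        have hjt : t ≤ j := by
          rw [Fin.le_def]
          have : ¬ ((j:ℕ) < (t:ℕ)) := hj
          omega
        have hlj : lam j ≤ lam t := hlam.antitone hjt
        calc a' * ‖v‖ ≤ Real.exp (-lam j - δ/4) * ‖v‖ := by
              apply mul_le_mul_of_nonneg_right _ (norm_nonneg v)
              rw [ha']; exact Real.exp_le_exp.2 (by linarith)
          _ ≤ ‖(A (m+1)).symm v‖ := hAsymm_low (m+1) j v hv
      · rw [hF'perp]
        refine blk_norm_le E horth P _ (fun j _ v hv => hAsymm_inv (m+1) j v hv) b' hb'0 ?_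
        intro j hj v hv
        have hjlt : (j:ℕ) < (t:ℕ) := hj
        have ht1k : (t:ℕ) ≤ k := le_of_lt t.isLt
        have htpos : 1 ≤ (t:ℕ) := by omega
        have hkt : ((t:ℕ)-1)+1 < k := by
          have := t.isLt; omega
        set t0 : Fin k := ⟨(t:ℕ)-1, by omega⟩ with ht0
        have hjt0 : j ≤ t0 := by rw [Fin.le_def]; simp [ht0]; omega
        have h1 : lam t0 ≤ lam j := hlam.antitone hjt0
        have h2 : 2*κ ≤ lam t0 - lam ⟨((t:ℕ)-1)+1, hkt⟩ := hgap t0 hkt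
        have htt : (⟨((t:ℕ)-1)+1, hkt⟩ : Fin k) = t := by
          apply Fin.ext; simp; omega
        rw [htt] at h2
        calc ‖(A (m+1)).symm v‖ ≤ Real.exp (-lam j + δ/4) * ‖v‖ := hAsymm_up (m+1) j v hv
          _ ≤ b' * ‖v‖ := by
              apply mul_le_mul_of_nonneg_right _ (norm_nonneg v)
              rw [hb'def, ha', ← Real.exp_add]
              exact Real.exp_le_exp.2 (by linarith)
      · exact hDi (m+1)
    have hcone := cone_lemma F' a' b' εi hb'0 hεi0 hba' L' hyp
    have hc2 : Real.exp (-lam t - 3*δ/8) ≤ a' - 2*εi := by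
      have h2e := (hεib t).2
      have heq : Real.exp (-lam t - 3*δ/8) = Real.exp (-(δ/8)) * a' := by
        rw [ha', ← Real.exp_add]; congr 1; ring
      rw [heq]; rw [ha'] at *; linarith
    have hc2' : (0:ℝ) < a' - 2*εi := lt_of_lt_of_le (hexp _) hc2
    -- V' and sv_le
    rw [hXeq]
    set V' : Submodule ℝ (Euc d) :=
      W'.map (((prodE K).symm.toLinearEquiv : Euc d →ₗ[ℝ] Euc d)) with hV'
    have hV'rank : Module.finrank ℝ V' = d - (i:ℕ) := by
      rw [hV', LinearEquiv.finrank_map_eq]; exact hW'rank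
    refine sv_le (prodE K) i V' hV'rank _ (le_of_lt (hexp _)) ?_
    rintro u ⟨w, hwW', rfl⟩
    have hPsymm : ∀ z : Euc d, (prodE K).symm z = prodL L' z := by
      intro z
      rw [hL', ← prodE_coe, ← prodE_symm]
    have h1 := hcone w (hW'F hwW')
    rw [hL'len] at h1
    have h5 : ((prodE K).symm.toLinearEquiv : Euc d →ₗ[ℝ] Euc d) w = (prodE K).symm w := rfl
    have h6 : (prodE K) (((prodE K).symm.toLinearEquiv : Euc d →ₗ[ℝ] Euc d) w) = w := by
      rw [h5]; exact (prodE K).apply_symm_apply w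
    have hu1 : (a' - 2*εi)^n * ‖w‖
        ≤ ‖((prodE K).symm.toLinearEquiv : Euc d →ₗ[ℝ] Euc d) w‖ := by
      rw [h5, hPsymm]; exact h1
    have h7 : Real.exp ((n:ℝ) * (-lam t - 3*δ/8)) ≤ (a' - 2*εi)^n := by
      rw [Real.exp_nat_mul]
      exact pow_le_pow_left₀ (le_of_lt (hexp _)) hc2 n
    have h8 : (1:ℝ) ≤ Real.exp ((n:ℝ)*(lam t + 3*δ/8)) * (a' - 2*εi)^n := by
      have h9 := mul_le_mul_of_nonneg_left h7 (le_of_lt (hexp ((n:ℝ)*(lam t + 3*δ/8))))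
      calc (1:ℝ) = Real.exp ((n:ℝ)*(lam t + 3*δ/8)) * Real.exp ((n:ℝ)*(-lam t - 3*δ/8)) := by
            rw [← Real.exp_add,
              show (n:ℝ)*(lam t + 3*δ/8) + (n:ℝ)*(-lam t - 3*δ/8) = 0 by ring, Real.exp_zero]
        _ ≤ _ := h9
    calc ‖(prodE K) (((prodE K).symm.toLinearEquiv : Euc d →ₗ[ℝ] Euc d) w)‖
        = ‖w‖ := by rw [h6]
      _ ≤ (Real.exp ((n:ℝ)*(lam t + 3*δ/8)) * (a' - 2*εi)^n) * ‖w‖ :=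
          le_mul_of_one_le_left (norm_nonneg _) h8
      _ = Real.exp ((n:ℝ)*(lam t + 3*δ/8)) * ((a' - 2*εi)^n * ‖w‖) := by ring
      _ ≤ Real.exp ((n:ℝ)*(lam t + 3*δ/8))
            * ‖((prodE K).symm.toLinearEquiv : Euc d →ₗ[ℝ] Euc d) w‖ :=
          mul_le_mul_of_nonneg_left hu1 (le_of_lt (hexp _))

end SVP

set_option maxHeartbeats 2000000 in
open SVP in
theorem singular_values_of_perturbed_products {d k : ℕ}
    (E : Fin k → Submodule ℝ (Euc d))
    (horth : ∀ i j : Fin k, i ≠ j → ∀ v ∈ E i, ∀ w ∈ E j, (inner ℝ v w : ℝ) = 0)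
    (hspan : (⨆ i, E i) = ⊤)
    (lam : Fin k → ℝ) (hlam : StrictAnti lam) (κ δ : ℝ)
    (hκ : IsLeast {x : ℝ | ∃ i j : Fin k, (j : ℕ) = (i : ℕ) + 1 ∧ x = (lam i - lam j) / 2} κ)
    (hδ : 0 < δ) (hδκ : δ < κ / 2) :
    ∃ γ : ℝ, 0 < γ ∧ ∃ α₁ : ℝ, 0 < α₁ ∧
      ∀ A C : ℕ → (Euc d ≃L[ℝ] Euc d),
        (∀ n : ℕ, ∀ i : Fin k, ∀ v ∈ E i, A n v ∈ E i) →
        (∀ n : ℕ, ∀ i : Fin k, ∀ v ∈ E i, v ≠ 0 →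
          Real.exp (lam i - δ / 4) * ‖v‖ < ‖A n v‖ ∧
          ‖A n v‖ < Real.exp (lam i + δ / 4) * ‖v‖) →
        (∀ n : ℕ, ‖((A n : Euc d →L[ℝ] Euc d)) - ((C n : Euc d →L[ℝ] Euc d))‖ < α₁) →
        ∀ n : ℕ, 1 ≤ n → ∀ i : Fin d,
          |(1 / (n : ℝ)) * Real.log (sv (compSeq (fun m => (A m : Euc d →L[ℝ] Euc d)) n) i) -
            (1 / (n : ℝ)) * Real.log (sv (compSeq (fun m => (C m : Euc d →L[ℝ] Euc d)) n) i)|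
            < δ := by
  classical
  have hexp : ∀ x : ℝ, (0:ℝ) < Real.exp x := fun x => Real.exp_pos x
  obtain ⟨⟨i0, j0, hj0, hκval⟩, hκlb⟩ := hκ
  have hk2 : 2 ≤ k := by have h1 := j0.isLt; have h2 := i0.isLt; omega
  have hκpos : 0 < κ := by
    rw [hκval]
    have : lam j0 < lam i0 := hlam (show i0 < j0 by rw [Fin.lt_def]; omega)
    linarith
  have hgap : ∀ t : Fin k, ∀ ht : (t:ℕ)+1 < k, 2*κ ≤ lam t - lam ⟨(t:ℕ)+1, ht⟩ := by
    intro t ht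
    have := hκlb ⟨t, ⟨(t:ℕ)+1, ht⟩, by simp, rfl⟩
    linarith
  have hδκ2 : δ ≤ κ := by linarith
  have hk0 : 0 < k := by omega
  set kl : Fin k := ⟨k-1, by omega⟩ with hkl
  set k0 : Fin k := ⟨0, hk0⟩ with hk0f
  set mf := Real.exp (lam kl - δ/4) with hmf
  set mi := Real.exp (-lam k0 - δ/4) with hmi
  set ρ := Real.exp (-κ) with hρ
  set η := Real.exp (-(δ/8)) with hη
  have hρ1 : ρ < 1 := by rw [hρ]; exact Real.exp_lt_one_iff.2 (by linarith)
  have hη1 : η < 1 := by rw [hη]; exact Real.exp_lt_one_iff.2 (by linarith)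
  set η' := min (1 - ρ) (1 - η) with hη'
  have hη'pos : 0 < η' := by
    rw [hη']
    exact lt_min (by linarith) (by linarith)
  have hmfpos : 0 < mf := hexp _
  have hmipos : 0 < mi := hexp _
  set α : ℝ := min (min (mf/2) (mf * η' / 6)) (mf^2 * mi * η' / 12) with hα
  have hαpos : 0 < α := by
    rw [hα]
    refine lt_min (lt_min (by positivity) (by positivity)) (by positivity)
  refine ⟨1, one_pos, α, hαpos, ?_⟩
  intro A C hAinv hAbnd hAC n hn i
  -- nonstrict bounds for A
  have hAlow : ∀ m (j : Fin k), ∀ v ∈ E j, Real.exp (lam j - δ/4) * ‖v‖ ≤ ‖A m v‖ := by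
    intro m j v hv
    by_cases hv0 : v = 0
    · simp [hv0]
    · exact le_of_lt (hAbnd m j v hv hv0).1
  have hAup : ∀ m (j : Fin k), ∀ v ∈ E j, ‖A m v‖ ≤ Real.exp (lam j + δ/4) * ‖v‖ := by
    intro m j v hv
    by_cases hv0 : v = 0
    · simp [hv0]
    · exact le_of_lt (hAbnd m j v hv hv0).2
  -- inverse facts (per block)
  have hAsymm_inv : ∀ m (j : Fin k), ∀ v ∈ E j, (A m).symm v ∈ E j := by
    intro m j v hv
    have hmap : (E j).map ((A m).toLinearEquiv : Euc d →ₗ[ℝ] Euc d) = E j := by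
      apply Submodule.eq_of_le_of_finrank_le
      · rintro _ ⟨u, hu, rfl⟩
        exact hAinv m j u hu
      · rw [LinearEquiv.finrank_map_eq]
    rw [← hmap] at hv
    obtain ⟨u, hu, huv⟩ := hv
    have hsy : (A m).symm v = u := by
      rw [← huv]; exact (A m).symm_apply_apply u
    rwa [hsy]
  have hAsymm_up : ∀ m (j : Fin k), ∀ v ∈ E j,
      ‖(A m).symm v‖ ≤ Real.exp (-lam j + δ/4) * ‖v‖ := by
    intro m j v hv
    have hu := hAsymm_inv m j v hv
    have h1 := hAlow m j _ hu
    rw [(A m).apply_symm_apply] at h1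
    have h3 : ‖(A m).symm v‖ * Real.exp (lam j - δ/4) ≤ ‖v‖ := by linarith [h1]
    have h4 : ‖(A m).symm v‖ ≤ ‖v‖ / Real.exp (lam j - δ/4) := (le_div_iff₀ (hexp _)).2 h3
    calc ‖(A m).symm v‖ ≤ ‖v‖ / Real.exp (lam j - δ/4) := h4
      _ = Real.exp (-lam j + δ/4) * ‖v‖ := by
          rw [div_eq_inv_mul, ← Real.exp_neg]
          have he : -(lam j - δ/4) = -lam j + δ/4 := by ring
          rw [he]
  -- global bounds
  have hlamkl : ∀ j : Fin k, lam kl ≤ lam j := by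
    intro j
    refine hlam.antitone ?_
    rw [Fin.le_def]
    have := j.isLt
    simp [hkl]
    omega
  have hlamk0 : ∀ j : Fin k, lam j ≤ lam k0 := by
    intro j
    refine hlam.antitone ?_
    rw [Fin.le_def]
    simp [hk0f]
  have hAglow : ∀ m, ∀ u : Euc d, mf * ‖u‖ ≤ ‖A m u‖ := by
    intro m u
    have hmem : u ∈ blk E (fun _ => True) := by rw [blk_true E hspan]; trivial
    refine blk_norm_ge E horth (fun _ => True) ((A m : Euc d →L[ℝ] Euc d))
      (fun j _ v hv => hAinv m j v hv) mf (le_of_lt hmfpos) ?_ u hmem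
    intro j _ v hv
    calc mf * ‖v‖ ≤ Real.exp (lam j - δ/4) * ‖v‖ := by
          apply mul_le_mul_of_nonneg_right _ (norm_nonneg v)
          rw [hmf]; exact Real.exp_le_exp.2 (by linarith [hlamkl j])
      _ ≤ ‖A m v‖ := hAlow m j v hv
  have hAgsymm_up : ∀ m, ∀ u : Euc d, ‖(A m).symm u‖ ≤ mf⁻¹ * ‖u‖ := by
    intro m u
    have hmem : u ∈ blk E (fun _ => True) := by rw [blk_true E hspan]; trivial
    refine blk_norm_le E horth (fun _ => True) (((A m).symm : Euc d →L[ℝ] Euc d))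
      (fun j _ v hv => hAsymm_inv m j v hv) mf⁻¹ (by positivity) ?_ u hmem
    intro j _ v hv
    calc ‖(A m).symm v‖ ≤ Real.exp (-lam j + δ/4) * ‖v‖ := hAsymm_up m j v hv
      _ ≤ mf⁻¹ * ‖v‖ := by
          apply mul_le_mul_of_nonneg_right _ (norm_nonneg v)
          rw [hmf, ← Real.exp_neg]
          exact Real.exp_le_exp.2 (by linarith [hlamkl j])
  have hαmf : α ≤ mf/2 := le_trans (min_le_left _ _) (min_le_left _ _)
  have hαmf6 : α ≤ mf * η' / 6 := le_trans (min_le_left _ _) (min_le_right _ _)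
  have hαmi : α ≤ mf^2 * mi * η' / 12 := min_le_right _ _
  have hACle : ∀ m, ∀ z : Euc d,
      ‖((A m : Euc d →L[ℝ] Euc d) - (C m : Euc d →L[ℝ] Euc d)) z‖ ≤ α * ‖z‖ := by
    intro m z
    calc ‖((A m : Euc d →L[ℝ] Euc d) - (C m : Euc d →L[ℝ] Euc d)) z‖
        ≤ ‖(A m : Euc d →L[ℝ] Euc d) - (C m : Euc d →L[ℝ] Euc d)‖ * ‖z‖ :=
          ContinuousLinearMap.le_opNorm _ z
      _ ≤ α * ‖z‖ := mul_le_mul_of_nonneg_right (le_of_lt (hAC m)) (norm_nonneg _)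
  have hCsymm : ∀ m, ∀ z : Euc d, ‖(C m).symm z‖ ≤ (2/mf) * ‖z‖ := by
    intro m z
    have hx : (C m) ((C m).symm z) = z := (C m).apply_symm_apply z
    have h1 : ‖A m ((C m).symm z) - C m ((C m).symm z)‖ ≤ α * ‖(C m).symm z‖ := by
      simpa using hACle m ((C m).symm z)
    rw [hx] at h1
    have h3 : ‖A m ((C m).symm z)‖ - ‖A m ((C m).symm z) - z‖ ≤ ‖z‖ := by
      have h4 : ‖A m ((C m).symm z)‖ - ‖A m ((C m).symm z) - z‖
          ≤ ‖A m ((C m).symm z) - (A m ((C m).symm z) - z)‖ :=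
        norm_sub_norm_le _ _
      have h5 : A m ((C m).symm z) - (A m ((C m).symm z) - z) = z := by abel
      rw [h5] at h4
      exact h4
    have h7 := hAglow m ((C m).symm z)
    have hαu : α * ‖(C m).symm z‖ ≤ (mf/2) * ‖(C m).symm z‖ :=
      mul_le_mul_of_nonneg_right hαmf (norm_nonneg _)
    have h4 : (mf/2) * ‖(C m).symm z‖ ≤ ‖z‖ := by linarith
    have hmf2 : (0:ℝ) < mf/2 := by positivity
    calc ‖(C m).symm z‖ = (mf/2)⁻¹ * ((mf/2) * ‖(C m).symm z‖) :=
          (inv_mul_cancel_left₀ (ne_of_gt hmf2) _).symm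
      _ ≤ (mf/2)⁻¹ * ‖z‖ := mul_le_mul_of_nonneg_left h4 (by positivity)
      _ = (2/mf) * ‖z‖ := by
          rw [show ((mf/2)⁻¹ : ℝ) = 2/mf by
            rw [div_eq_mul_inv, div_eq_mul_inv, mul_inv, inv_inv, mul_comm]]
  set εi : ℝ := 2*α/mf^2 with hεidef
  have hεi0 : 0 ≤ εi := by positivity
  have hDi : ∀ m, ‖(((C m).symm : Euc d →L[ℝ] Euc d)) - (((A m).symm : Euc d →L[ℝ] Euc d))‖
      ≤ εi := by
    intro m
    refine ContinuousLinearMap.opNorm_le_bound _ hεi0 ?_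
    intro z
    have hx : (C m) ((C m).symm z) = z := (C m).apply_symm_apply z
    have key : (((C m).symm : Euc d →L[ℝ] Euc d)) z - (((A m).symm : Euc d →L[ℝ] Euc d)) z
        = (A m).symm (A m ((C m).symm z) - C m ((C m).symm z)) := by
      rw [map_sub, (A m).symm_apply_apply, hx]
      rfl
    have h2 : ‖A m ((C m).symm z) - C m ((C m).symm z)‖ ≤ α * ‖(C m).symm z‖ := by
      simpa using hACle m ((C m).symm z)
    have hcs := hCsymm m z
    calc ‖(((C m).symm : Euc d →L[ℝ] Euc d)) z - (((A m).symm : Euc d →L[ℝ] Euc d)) z‖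
        = ‖(A m).symm (A m ((C m).symm z) - C m ((C m).symm z))‖ := by rw [key]
      _ ≤ mf⁻¹ * ‖A m ((C m).symm z) - C m ((C m).symm z)‖ := hAgsymm_up m _
      _ ≤ mf⁻¹ * (α * ‖(C m).symm z‖) := by
          apply mul_le_mul_of_nonneg_left h2 (by positivity)
      _ ≤ mf⁻¹ * (α * ((2/mf) * ‖z‖)) := by
          apply mul_le_mul_of_nonneg_left _ (by positivity)
          exact mul_le_mul_of_nonneg_left hcs (le_of_lt hαpos)
      _ = εi * ‖z‖ := by
          rw [hεidef]
          field_simp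
  -- epsilon constraints
  have hεfb : ∀ t : Fin k, 6 * α ≤ (1 - ρ) * Real.exp (lam t - δ/4)
      ∧ 2 * α ≤ (1 - η) * Real.exp (lam t - δ/4) := by
    intro t
    have hm : mf ≤ Real.exp (lam t - δ/4) := by
      rw [hmf]; exact Real.exp_le_exp.2 (by linarith [hlamkl t])
    have h1 : η' ≤ 1 - ρ := min_le_left _ _
    have h2 : η' ≤ 1 - η := min_le_right _ _
    constructor
    · calc 6*α ≤ mf * η' := by linarith
        _ ≤ Real.exp (lam t - δ/4) * (1-ρ) := by
            apply mul_le_mul hm h1 (le_of_lt hη'pos) (le_of_lt (hexp _))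
        _ = (1-ρ) * Real.exp (lam t - δ/4) := by ring
    · have hmη : (0:ℝ) ≤ mf * η' := by positivity
      calc 2*α ≤ mf * η' / 3 := by linarith
        _ ≤ mf * η' := by linarith
        _ ≤ Real.exp (lam t - δ/4) * (1-η) := by
            apply mul_le_mul hm h2 (le_of_lt hη'pos) (le_of_lt (hexp _))
        _ = (1-η) * Real.exp (lam t - δ/4) := by ring
  have hεib : ∀ t : Fin k, 6 * εi ≤ (1 - ρ) * Real.exp (-lam t - δ/4)
      ∧ 2 * εi ≤ (1 - η) * Real.exp (-lam t - δ/4) := by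
    intro t
    have hm : mi ≤ Real.exp (-lam t - δ/4) := by
      rw [hmi]; exact Real.exp_le_exp.2 (by linarith [hlamk0 t])
    have h1 : η' ≤ 1 - ρ := min_le_left _ _
    have h2 : η' ≤ 1 - η := min_le_right _ _
    have hkey : 12 * α ≤ mf^2 * (mi * η') := by
      calc 12 * α ≤ mf^2 * mi * η' := by linarith
        _ = mf^2 * (mi * η') := by ring
    have hεile : 6 * εi ≤ mi * η' := by
      have hm2 : (0:ℝ) < mf^2 := by positivity
      rw [hεidef, show 6 * (2*α/mf^2) = 12*α/mf^2 by ring, div_le_iff₀ hm2]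
      calc 12 * α ≤ mf^2 * (mi*η') := hkey
        _ = mi * η' * mf^2 := by ring
    constructor
    · calc 6*εi ≤ mi * η' := hεile
        _ ≤ Real.exp (-lam t - δ/4) * (1-ρ) := by
            apply mul_le_mul hm h1 (le_of_lt hη'pos) (le_of_lt (hexp _))
        _ = (1-ρ) * Real.exp (-lam t - δ/4) := by ring
    · calc 2*εi ≤ 6*εi := by linarith
        _ ≤ mi * η' := hεile
        _ ≤ Real.exp (-lam t - δ/4) * (1-η) := by
            apply mul_le_mul hm h2 (le_of_lt hη'pos) (le_of_lt (hexp _))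
        _ = (1-η) * Real.exp (-lam t - δ/4) := by ring
  -- choice of the block index
  set N : ℕ → ℕ := fun s => Module.finrank ℝ (blk E (fun j : Fin k => (j:ℕ) < s)) with hN
  have hN0 : N 0 = 0 := by
    have hbot : blk E (fun j : Fin k => (j:ℕ) < 0) = ⊥ := by
      rw [eq_bot_iff]
      refine iSup_le fun j => iSup_le fun hj => ?_
      exact absurd hj (by omega)
    simp only [hN]
    rw [hbot]
    exact finrank_bot ℝ (Euc d)
  have hNk : N k = d := by
    have htop : blk E (fun j : Fin k => (j:ℕ) < k) = ⊤ := by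
      rw [eq_top_iff, ← hspan]
      exact iSup_le fun j => le_blk E _ j.isLt
    simp only [hN]
    rw [htop]
    simp
  set tn := Nat.findGreatest (fun s => N s ≤ (i:ℕ)) (k-1) with htn
  have htnk : tn < k := by
    have := Nat.findGreatest_le (P := fun s => N s ≤ (i:ℕ)) (k-1)
    omega
  have htn1 : N tn ≤ (i:ℕ) := by
    refine Nat.findGreatest_spec (P := fun s => N s ≤ (i:ℕ)) (m := 0) (n := k-1) (by omega) ?_
    show N 0 ≤ (i:ℕ)
    rw [hN0]
    omega
  have htn2 : (i:ℕ) < N (tn+1) := by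
    by_cases hc : tn+1 ≤ k-1
    · have := Nat.findGreatest_is_greatest (P := fun s => N s ≤ (i:ℕ))
        (show tn < tn+1 by omega) hc
      omega
    · have hek : tn+1 = k := by omega
      rw [hek, hNk]
      exact i.isLt
  set t : Fin k := ⟨tn, htnk⟩ with ht
  have hMA := master E horth hspan lam hlam κ δ hκpos hgap hδ hδκ2 A A hAinv hAlow hAup
    0 0 le_rfl le_rfl
    (fun t' => by
      have hr1 : (0:ℝ) ≤ (1 - ρ) * Real.exp (lam t' - δ/4) :=
        mul_nonneg (by linarith) (le_of_lt (hexp _))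
      have hr2 : (0:ℝ) ≤ (1 - η) * Real.exp (lam t' - δ/4) :=
        mul_nonneg (by linarith) (le_of_lt (hexp _))
      exact ⟨by linarith, by linarith⟩)
    (fun t' => by
      have hr1 : (0:ℝ) ≤ (1 - ρ) * Real.exp (-lam t' - δ/4) :=
        mul_nonneg (by linarith) (le_of_lt (hexp _))
      have hr2 : (0:ℝ) ≤ (1 - η) * Real.exp (-lam t' - δ/4) :=
        mul_nonneg (by linarith) (le_of_lt (hexp _))
      exact ⟨by linarith, by linarith⟩)
    (fun m => by simp only [sub_self, norm_zero, le_refl])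
    (fun m => by simp only [sub_self, norm_zero, le_refl]) n i t htn1 htn2
  have hMC := master E horth hspan lam hlam κ δ hκpos hgap hδ hδκ2 A C hAinv hAlow hAup
    α εi (le_of_lt hαpos) hεi0 hεfb hεib
    (fun m => by rw [norm_sub_rev]; exact le_of_lt (hAC m)) hDi n i t htn1 htn2
  obtain ⟨hA1, hA2⟩ := hMA
  obtain ⟨hC1, hC2⟩ := hMC
  set x := sv (compSeq (fun m => (A m : Euc d →L[ℝ] Euc d)) n) (i:ℕ) with hx
  set y := sv (compSeq (fun m => (C m : Euc d →L[ℝ] Euc d)) n) (i:ℕ) with hy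
  have hx0 : 0 < x := lt_of_lt_of_le (hexp _) hA1
  have hy0 : 0 < y := lt_of_lt_of_le (hexp _) hC1
  have hnpos : (0:ℝ) < (n:ℝ) := by exact_mod_cast hn
  have hinv : (0:ℝ) < 1/(n:ℝ) := by positivity
  have hxl : (n:ℝ)*(lam t - 3*δ/8) ≤ Real.log x := by
    rw [← Real.log_exp ((n:ℝ)*(lam t - 3*δ/8))]
    exact (Real.log_le_log_iff (hexp _) hx0).2 hA1
  have hxu : Real.log x ≤ (n:ℝ)*(lam t + 3*δ/8) := by
    rw [← Real.log_exp ((n:ℝ)*(lam t + 3*δ/8))]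
    exact (Real.log_le_log_iff hx0 (hexp _)).2 hA2
  have hyl : (n:ℝ)*(lam t - 3*δ/8) ≤ Real.log y := by
    rw [← Real.log_exp ((n:ℝ)*(lam t - 3*δ/8))]
    exact (Real.log_le_log_iff (hexp _) hy0).2 hC1
  have hyu : Real.log y ≤ (n:ℝ)*(lam t + 3*δ/8) := by
    rw [← Real.log_exp ((n:ℝ)*(lam t + 3*δ/8))]
    exact (Real.log_le_log_iff hy0 (hexp _)).2 hC2
  have e1 : 1/(n:ℝ) * Real.log x ≤ lam t + 3*δ/8 := by
    have := mul_le_mul_of_nonneg_left hxu (le_of_lt hinv)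
    rwa [show (1/(n:ℝ)) * ((n:ℝ)*(lam t + 3*δ/8)) = lam t + 3*δ/8 by field_simp] at this
  have e2 : lam t - 3*δ/8 ≤ 1/(n:ℝ) * Real.log x := by
    have := mul_le_mul_of_nonneg_left hxl (le_of_lt hinv)
    rwa [show (1/(n:ℝ)) * ((n:ℝ)*(lam t - 3*δ/8)) = lam t - 3*δ/8 by field_simp] at this
  have e3 : 1/(n:ℝ) * Real.log y ≤ lam t + 3*δ/8 := by
    have := mul_le_mul_of_nonneg_left hyu (le_of_lt hinv)
    rwa [show (1/(n:ℝ)) * ((n:ℝ)*(lam t + 3*δ/8)) = lam t + 3*δ/8 by field_simp] at this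
  have e4 : lam t - 3*δ/8 ≤ 1/(n:ℝ) * Real.log y := by
    have := mul_le_mul_of_nonneg_left hyl (le_of_lt hinv)
    rwa [show (1/(n:ℝ)) * ((n:ℝ)*(lam t - 3*δ/8)) = lam t - 3*δ/8 by field_simp] at this
  rw [abs_sub_lt_iff]
  constructor <;> linarith
end
end

section
/- Let (C_n) be a sequence in GL(d,ℝ), γ > 0, and suppose each C_n maps the closed cone closure(K_{k−1,γ}) = {v : ‖∑_{i≤k−1} v^i‖ ≤ γ·‖∑_{i≥k} v^i‖} into itself in the sense that C_n⁻¹(K_{k−1,γ}) ⊂ K_{k−1,γ·e^{−κ+δ/2}} for some κ > δ/2 > 0. Then H_k := ⋂_{n≥1} (C^{(n)})⁻¹(closure(K_{k−1,γ})), where C^{(n)} = C_n ··· C_1, is a linear subspace of ℝ^d. -/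
noncomputable section

/-- Open cone `K_{j,γ}`. -/
def coneL {d k : ℕ} (E : Fin k → Submodule ℝ (Euc d)) (j : ℕ) (γ : ℝ) : Set (Euc d) :=
  {v | ‖projS (Vlow E j) v‖ < γ * ‖v - projS (Vlow E j) v‖}

/-- Closed cone `closure(K_{j,γ})`. -/
def coneLc {d k : ℕ} (E : Fin k → Submodule ℝ (Euc d)) (j : ℕ) (γ : ℝ) : Set (Euc d) :=
  {v | ‖projS (Vlow E j) v‖ ≤ γ * ‖v - projS (Vlow E j) v‖}

namespace ConeProofAux

variable {d : ℕ}

/-! ### Generic cones for a submodule -/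

/-- open cone -/
def Ko (W : Submodule ℝ (Euc d)) (γ : ℝ) : Set (Euc d) :=
  {v | ‖projS W v‖ < γ * ‖v - projS W v‖}

/-- closed cone -/
def Kc (W : Submodule ℝ (Euc d)) (γ : ℝ) : Set (Euc d) :=
  {v | ‖projS W v‖ ≤ γ * ‖v - projS W v‖}

lemma coneL_eq {k : ℕ} (E : Fin k → Submodule ℝ (Euc d)) (j : ℕ) (γ : ℝ) :
    coneL E j γ = Ko (Vlow E j) γ := rfl

lemma coneLc_eq {k : ℕ} (E : Fin k → Submodule ℝ (Euc d)) (j : ℕ) (γ : ℝ) :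
    coneLc E j γ = Kc (Vlow E j) γ := rfl

lemma projS_mem (W : Submodule ℝ (Euc d)) (v : Euc d) : projS W v ∈ W :=
  (W.orthogonalProjectionOnto v).2

lemma projS_of_mem (W : Submodule ℝ (Euc d)) {v : Euc d} (h : v ∈ W) : projS W v = v := by
  exact (Submodule.starProjection_eq_self_iff (K := W)).mpr h

lemma projS_idem (W : Submodule ℝ (Euc d)) (v : Euc d) : projS W (projS W v) = projS W v :=
  projS_of_mem W (projS_mem W v)

lemma sub_projS_mem_orthogonal (W : Submodule ℝ (Euc d)) (v : Euc d) : v - projS W v ∈ Wᗮ := by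
  exact Submodule.sub_starProjection_mem_orthogonal (K := W) v

lemma projS_of_mem_orthogonal (W : Submodule ℝ (Euc d)) {v : Euc d} (h : v ∈ Wᗮ) :
    projS W v = 0 := by
  simp [projS, Submodule.orthogonalProjectionOnto_apply_of_mem_orthogonal h]

lemma Ko_subset_Kc (W : Submodule ℝ (Euc d)) (γ : ℝ) : Ko W γ ⊆ Kc W γ := by
  intro v h
  show ‖projS W v‖ ≤ γ * ‖v - projS W v‖
  exact le_of_lt h

lemma Ko_mono (W : Submodule ℝ (Euc d)) {γ₁ γ₂ : ℝ} (h : γ₁ ≤ γ₂) : Ko W γ₁ ⊆ Ko W γ₂ :=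
  fun v hv => lt_of_lt_of_le hv (mul_le_mul_of_nonneg_right h (norm_nonneg _))

lemma Kc_mono (W : Submodule ℝ (Euc d)) {γ₁ γ₂ : ℝ} (h : γ₁ ≤ γ₂) : Kc W γ₁ ⊆ Kc W γ₂ :=
  fun v hv => le_trans hv (mul_le_mul_of_nonneg_right h (norm_nonneg _))

lemma zero_mem_Kc (W : Submodule ℝ (Euc d)) (γ : ℝ) : (0 : Euc d) ∈ Kc W γ := by
  simp [Kc]

lemma smul_mem_Kc (W : Submodule ℝ (Euc d)) (γ : ℝ) {v : Euc d} (hv : v ∈ Kc W γ) (c : ℝ) :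
    c • v ∈ Kc W γ := by
  have h1 : projS W (c • v) = c • projS W v := map_smul _ _ _
  have h2 : c • v - projS W (c • v) = c • (v - projS W v) := by rw [h1, smul_sub]
  show ‖projS W (c • v)‖ ≤ γ * ‖c • v - projS W (c • v)‖
  rw [h2, h1, norm_smul, norm_smul]
  calc |c| * ‖projS W v‖ ≤ |c| * (γ * ‖v - projS W v‖) :=
        mul_le_mul_of_nonneg_left hv (abs_nonneg c)
    _ = γ * (|c| * ‖v - projS W v‖) := by ring

lemma isClosed_Kc (W : Submodule ℝ (Euc d)) (γ : ℝ) : IsClosed (Kc W γ) := by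
  have h1 : Continuous fun v : Euc d => ‖projS W v‖ := (projS W).continuous.norm
  have h2 : Continuous fun v : Euc d => γ * ‖v - projS W v‖ :=
    continuous_const.mul ((continuous_id.sub (projS W).continuous).norm)
  exact isClosed_le h1 h2

/-- closed version of the cone-contraction hypothesis -/
lemma image_Kc_subset (W : Submodule ℝ (Euc d)) {γ γ' : ℝ} (hγ : 0 < γ) (hγ' : 0 ≤ γ')
    (A : Euc d ≃L[ℝ] Euc d) (hA : ⇑A '' Ko W γ ⊆ Ko W γ') {u : Euc d} (hu : u ∈ Kc W γ) :
    A u ∈ Kc W γ' := by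
  by_cases hQ : ‖u - projS W u‖ = 0
  · -- then u = 0
    have hP : ‖projS W u‖ ≤ 0 := by
      have := hu; simp only [Kc, Set.mem_setOf_eq] at this
      calc ‖projS W u‖ ≤ γ * ‖u - projS W u‖ := this
        _ = 0 := by rw [hQ, mul_zero]
    have hP0 : projS W u = 0 := norm_le_zero_iff.mp hP
    have hu0 : u = 0 := by
      have h1 : u - projS W u = 0 := norm_eq_zero.mp hQ
      have := sub_eq_zero.mp h1
      rw [this, hP0]
    rw [hu0, map_zero]
    exact zero_mem_Kc W γ'
  · have hQpos : 0 < ‖u - projS W u‖ := lt_of_le_of_ne (norm_nonneg _) (Ne.symm hQ)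
    -- approximating sequence
    set uj : ℕ → Euc d := fun j => u - ((j : ℝ) + 1)⁻¹ • projS W u with huj
    have hmem : ∀ j, uj j ∈ Ko W γ := by
      intro j
      have hfac0 : (0:ℝ) ≤ 1 - ((j : ℝ) + 1)⁻¹ := by
        have : ((j : ℝ) + 1)⁻¹ ≤ 1 := by
          rw [inv_le_one_iff₀]; right; linarith [Nat.cast_nonneg (α := ℝ) j]
        linarith
      have hfac1 : 1 - ((j : ℝ) + 1)⁻¹ < 1 := by
        have : (0:ℝ) < ((j : ℝ) + 1)⁻¹ := by positivity
        linarith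
      have hP : projS W (uj j) = (1 - ((j : ℝ) + 1)⁻¹) • projS W u := by
        simp only [huj, map_sub, map_smul, projS_idem, sub_smul, one_smul]
      have hQ' : uj j - projS W (uj j) = u - projS W u := by
        rw [hP]; simp only [huj, sub_smul, one_smul]; abel
      show ‖projS W (uj j)‖ < γ * ‖uj j - projS W (uj j)‖
      rw [hQ', hP, norm_smul]
      rw [Real.norm_eq_abs, abs_of_nonneg hfac0]
      calc (1 - ((j : ℝ) + 1)⁻¹) * ‖projS W u‖
          ≤ (1 - ((j : ℝ) + 1)⁻¹) * (γ * ‖u - projS W u‖) :=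
            mul_le_mul_of_nonneg_left hu hfac0
        _ < 1 * (γ * ‖u - projS W u‖) := by
            apply mul_lt_mul_of_pos_right hfac1 (by positivity)
        _ = γ * ‖u - projS W u‖ := one_mul _
    have htend : Filter.Tendsto uj Filter.atTop (nhds u) := by
      have h0 : Filter.Tendsto (fun j : ℕ => ((j : ℝ) + 1)⁻¹ • projS W u) Filter.atTop
          (nhds ((0:ℝ) • projS W u)) := by
        apply Filter.Tendsto.smul_const
        simpa [one_div] using tendsto_one_div_add_atTop_nhds_zero_nat (𝕜 := ℝ)
      rw [zero_smul] at h0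
      have := Filter.Tendsto.sub (tendsto_const_nhds (x := u)) h0
      simpa using this
    have htend2 : Filter.Tendsto (fun j => A (uj j)) Filter.atTop (nhds (A u)) :=
      (A.continuous.tendsto u).comp htend
    apply (isClosed_Kc W γ').mem_of_tendsto htend2
    filter_upwards with j
    exact Ko_subset_Kc W γ' (hA ⟨uj j, hmem j, rfl⟩)

/-! ### the composition sequence as equivalences -/

def compSeqE (C : ℕ → (Euc d ≃L[ℝ] Euc d)) : ℕ → (Euc d ≃L[ℝ] Euc d)
  | 0 => ContinuousLinearEquiv.refl ℝ (Euc d)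
  | n + 1 => (compSeqE C n).trans (C (n + 1))

/-- abbreviation for the composition maps in the theorem -/
def T (C : ℕ → (Euc d ≃L[ℝ] Euc d)) (n : ℕ) : Euc d →L[ℝ] Euc d :=
  compSeq (fun m => ((C m : Euc d →L[ℝ] Euc d))) n

lemma compSeqE_coe (C : ℕ → (Euc d ≃L[ℝ] Euc d)) : ∀ n, ⇑(compSeqE C n) = ⇑(T C n)
  | 0 => rfl
  | n + 1 => by
      funext v
      show (C (n+1)) (compSeqE C n v) = (C (n+1)) (T C n v)
      rw [congrFun (compSeqE_coe C n) v]

lemma T_zero (C : ℕ → (Euc d ≃L[ℝ] Euc d)) (v : Euc d) : T C 0 v = v := rfl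

lemma T_succ (C : ℕ → (Euc d ≃L[ℝ] Euc d)) (n : ℕ) (v : Euc d) :
    T C (n+1) v = C (n+1) (T C n v) := rfl

lemma T_step (C : ℕ → (Euc d ≃L[ℝ] Euc d)) (n : ℕ) (v : Euc d) :
    T C n v = (C (n+1)).symm (T C (n+1) v) := by
  rw [T_succ, ContinuousLinearEquiv.symm_apply_apply]

lemma T_injective (C : ℕ → (Euc d ≃L[ℝ] Euc d)) (n : ℕ) : Function.Injective (T C n) := by
  rw [← compSeqE_coe]; exact (compSeqE C n).injective

/-! ### the invariant set -/

def Hset (W : Submodule ℝ (Euc d)) (γ : ℝ) (C : ℕ → (Euc d ≃L[ℝ] Euc d)) : Set (Euc d) :=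
  ⋂ (n : ℕ) (_ : 1 ≤ n), (⇑(T C n)) ⁻¹' Kc W γ

lemma mem_Hset_iff {W : Submodule ℝ (Euc d)} {γ : ℝ} {C : ℕ → (Euc d ≃L[ℝ] Euc d)} {v : Euc d} :
    v ∈ Hset W γ C ↔ ∀ n, 1 ≤ n → T C n v ∈ Kc W γ := by
  simp [Hset]

section WithHyp

variable {W : Submodule ℝ (Euc d)} {γ ε : ℝ} {C : ℕ → (Euc d ≃L[ℝ] Euc d)}
variable (hγ : 0 < γ) (hε0 : 0 < ε) (hε1 : ε < 1)
variable (hC : ∀ n, ⇑(C n).symm '' Ko W γ ⊆ Ko W (γ * ε))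

include hγ hε0 hε1 hC

lemma Hset_Kc_eps {v : Euc d} (hv : v ∈ Hset W γ C) (n : ℕ) : T C n v ∈ Kc W (γ * ε) := by
  rw [T_step C n v]
  exact image_Kc_subset W hγ (by positivity) (C (n+1)).symm (hC (n+1))
    (mem_Hset_iff.mp hv (n+1) (Nat.le_add_left 1 n))

lemma Hset_Kc_all {v : Euc d} (hv : v ∈ Hset W γ C) (n : ℕ) : T C n v ∈ Kc W γ :=
  Kc_mono W (by nlinarith) (Hset_Kc_eps hγ hε0 hε1 hC hv n)

/-- nestedness: being in the level-`n` cone forces all earlier levels -/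
lemma T_Kc_mono {y : Euc d} : ∀ n, T C n y ∈ Kc W γ → ∀ m, m ≤ n → T C m y ∈ Kc W γ := by
  intro n
  induction n with
  | zero => intro h m hm; rw [Nat.le_zero.mp hm]; exact h
  | succ n ih =>
      intro h m hm
      rcases Nat.lt_or_ge m (n+1) with hlt | hge
      · have hn : T C n y ∈ Kc W γ := by
          rw [T_step C n y]
          exact Kc_mono W (by nlinarith)
            (image_Kc_subset W hγ (by positivity) (C (n+1)).symm (hC (n+1)) h)
        exact ih hn m (Nat.lt_succ_iff.mp hlt)
      · have : m = n + 1 := le_antisymm hm hge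
        rw [this]; exact h

/-- vertical vectors stay out of the open cone (backward invariance of the complement) -/
lemma notKo_invariant {w : Euc d} (hw : w - projS W w = 0) :
    ∀ n, T C n w ∉ Ko W (γ * ε) := by
  intro n
  induction n with
  | zero =>
      intro h
      have : ‖projS W (T C 0 w)‖ < γ * ε * ‖T C 0 w - projS W (T C 0 w)‖ := h
      rw [T_zero, hw, norm_zero, mul_zero] at this
      exact absurd this (not_lt.mpr (norm_nonneg _))
  | succ n ih =>
      intro h
      have h' : T C (n+1) w ∈ Ko W γ := Ko_mono W (by nlinarith) h
      exact ih (by rw [T_step C n w]; exact hC (n+1) ⟨_, h', rfl⟩)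

lemma notKo_gamma {w : Euc d} (hw : w - projS W w = 0) {n : ℕ} (hn : 1 ≤ n) :
    T C n w ∉ Ko W γ := by
  intro h
  obtain ⟨n', rfl⟩ := Nat.exists_eq_add_of_le hn
  have : T C (1 + n') w = T C (n' + 1) w := by rw [Nat.add_comm]
  rw [this] at h
  exact notKo_invariant hγ hε0 hε1 hC hw n' (by rw [T_step C n' w]; exact hC (n'+1) ⟨_, h, rfl⟩)

lemma isClosed_Hset : IsClosed (Hset W γ C) := by
  apply isClosed_iInter; intro n; apply isClosed_iInter; intro _
  exact (isClosed_Kc W γ).preimage (T C n).continuous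

lemma smul_mem_Hset {v : Euc d} (hv : v ∈ Hset W γ C) (c : ℝ) : c • v ∈ Hset W γ C := by
  rw [mem_Hset_iff]
  intro n hn
  rw [map_smul]
  exact smul_mem_Kc W γ (mem_Hset_iff.mp hv n hn) c

lemma zero_mem_Hset : (0 : Euc d) ∈ Hset W γ C := by
  rw [mem_Hset_iff]; intro n _; rw [map_zero]; exact zero_mem_Kc W γ

end WithHyp

/-! ### pure real algebra: the cross-ratio bound -/

lemma lemQ {Cc β u w M : ℝ} (hCc : Cc ≤ 0) (hu : 0 < u) (huw : u < w)
    (hgs : 0 < u * (2*β + Cc*u)) (hgt : 0 < w * (2*β + Cc*w))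
    (hB : (β*(u+w) + Cc*u*w)^2 ≤ M * (u * (2*β + Cc*u)) * (w * (2*β + Cc*w))) :
    w ≤ (4*M - 2) * u := by
  have hw : 0 < w := hu.trans huw
  have he1 : 0 < 2*β + Cc*u := by
    rcases mul_pos_iff.mp hgs with ⟨_, h⟩ | ⟨h, _⟩
    · exact h
    · linarith
  have he2 : 0 < 2*β + Cc*w := by
    rcases mul_pos_iff.mp hgt with ⟨_, h⟩ | ⟨h, _⟩
    · exact h
    · linarith
  set p1 := u * (2*β + Cc*w) with hp1
  set p2 := w * (2*β + Cc*u) with hp2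
  have hp1pos : 0 < p1 := mul_pos hu he2
  have hp2pos : 0 < p2 := mul_pos hw he1
  have hkey : (p1 + p2)^2 ≤ 4 * M * p1 * p2 := by
    have hident : (p1 + p2)^2 = 4 * (β*(u+w) + Cc*u*w)^2 := by rw [hp1, hp2]; ring
    have hident2 : 4 * (M * (u * (2*β + Cc*u)) * (w * (2*β + Cc*w))) = 4 * M * p1 * p2 := by
      rw [hp1, hp2]; ring
    calc (p1 + p2)^2 = 4 * (β*(u+w) + Cc*u*w)^2 := hident
      _ ≤ 4 * (M * (u * (2*β + Cc*u)) * (w * (2*β + Cc*w))) := by linarith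
      _ = 4 * M * p1 * p2 := hident2
  have hp2le : p2 ≤ (4*M - 2) * p1 := by nlinarith [sq_nonneg p1, sq_nonneg (p1 - p2)]
  -- e2 ≤ e1
  have hee : 2*β + Cc*w ≤ 2*β + Cc*u := by nlinarith
  have h4M : 0 < 4*M - 2 := by
    by_contra hcon
    push_neg at hcon
    nlinarith
  have : w * (2*β + Cc*u) ≤ (4*M - 2) * (u * (2*β + Cc*u)) := by
    calc w * (2*β + Cc*u) = p2 := rfl
      _ ≤ (4*M - 2) * p1 := hp2le
      _ = (4*M - 2) * (u * (2*β + Cc*w)) := rfl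
      _ ≤ (4*M - 2) * (u * (2*β + Cc*u)) := by
          apply mul_le_mul_of_nonneg_left _ (le_of_lt h4M)
          exact mul_le_mul_of_nonneg_left hee (le_of_lt hu)
  have := le_of_mul_le_mul_right (by linarith [this] : w * (2*β + Cc*u) ≤ ((4*M-2)*u) * (2*β + Cc*u)) he1
  linarith

/-! ### quadratic expansions -/

lemma expand_inner (a b : Euc d) (s t : ℝ) :
    (inner ℝ (a + s • b) (a + t • b) : ℝ)
      = (inner ℝ a a : ℝ) + (inner ℝ a b : ℝ)*(s+t) + (inner ℝ b b : ℝ)*(s*t) := by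
  rw [inner_add_left, inner_add_right, inner_add_right, real_inner_smul_left,
    real_inner_smul_left, real_inner_smul_right, real_inner_smul_right, real_inner_comm b a]
  ring

lemma qf_eq (W : Submodule ℝ (Euc d)) (γ : ℝ) (x z : Euc d) (s t : ℝ) :
    γ^2*(inner ℝ ((x + s • z) - projS W (x + s • z)) ((x + t • z) - projS W (x + t • z)) : ℝ)
      - (inner ℝ (projS W (x + s • z)) (projS W (x + t • z)) : ℝ)
    = (γ^2*‖x - projS W x‖^2 - ‖projS W x‖^2)
      + (γ^2*(inner ℝ (x - projS W x) (z - projS W z) : ℝ)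
          - (inner ℝ (projS W x) (projS W z) : ℝ))*(s+t)
      + (γ^2*‖z - projS W z‖^2 - ‖projS W z‖^2)*(s*t) := by
  have hP : ∀ u : ℝ, projS W (x + u • z) = projS W x + u • projS W z := by
    intro u; rw [map_add, map_smul]
  have hQ : ∀ u : ℝ, (x + u • z) - projS W (x + u • z)
      = (x - projS W x) + u • (z - projS W z) := by
    intro u; rw [hP, smul_sub]; abel
  rw [hQ s, hQ t, hP s, hP t, expand_inner, expand_inner,
    real_inner_self_eq_norm_sq, real_inner_self_eq_norm_sq,
    real_inner_self_eq_norm_sq, real_inner_self_eq_norm_sq]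
  ring

lemma gval_eq (W : Submodule ℝ (Euc d)) (γ : ℝ) (x z : Euc d) (s : ℝ) :
    γ^2*‖(x + s • z) - projS W (x + s • z)‖^2 - ‖projS W (x + s • z)‖^2
    = (γ^2*‖x - projS W x‖^2 - ‖projS W x‖^2)
      + 2*(γ^2*(inner ℝ (x - projS W x) (z - projS W z) : ℝ)
          - (inner ℝ (projS W x) (projS W z) : ℝ))*s
      + (γ^2*‖z - projS W z‖^2 - ‖projS W z‖^2)*s^2 := by
  have h := qf_eq W γ x z s s
  rw [real_inner_self_eq_norm_sq, real_inner_self_eq_norm_sq] at h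
  linear_combination h

lemma le_of_sq_le_sq' {a b : ℝ} (ha : 0 ≤ a) (hb : 0 ≤ b) (h : a^2 ≤ b^2) : a ≤ b := by
  nlinarith

lemma helper_quad_pos {γ ε pp aa g D : ℝ} (hγ : 0 < γ) (hε0 : 0 < ε) (hε1 : ε < 1)
    (ha : 0 < aa) (hP : pp ≤ γ*ε*aa) (hpp : 0 ≤ pp) (hg : γ^2*aa^2 - pp^2 = g)
    (hD : D = γ^2 - (γ*ε)^2) : D * aa^2 ≤ g ∧ 0 < g := by
  subst hg hD
  have key : 0 < (γ*γ)*(aa*aa)*((1-ε)*(1+ε)) :=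
    mul_pos (mul_pos (mul_pos hγ hγ) (mul_pos ha ha))
      (mul_pos (by linarith) (by linarith))
  have h2 : pp*pp ≤ (γ*ε*aa)*(γ*ε*aa) := mul_self_le_mul_self hpp hP
  constructor
  · nlinarith
  · nlinarith

lemma helper_notJ {γ q p g : ℝ} (hγ : 0 < γ) (hq : 0 ≤ q) (h : γ*q < p)
    (hg : γ^2*q^2 - p^2 = g) : g < 0 := by
  subst hg
  have h2 : (γ*q)*(γ*q) < p*p := mul_self_lt_mul_self (by positivity) h
  nlinarith

lemma helper_Jof {γ q p g : ℝ} (hγ : 0 < γ) (hq : 0 ≤ q) (hp : 0 ≤ p)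
    (hg : γ^2*q^2 - p^2 = g) (h : 0 ≤ g) : p ≤ γ*q := by
  subst hg
  by_contra hcon
  push_neg at hcon
  have h2 : (γ*q)*(γ*q) < p*p := mul_self_lt_mul_self (by positivity) hcon
  nlinarith

lemma helper_Cq {γ q p g : ℝ} (hγ : 0 < γ) (hq : 0 ≤ q) (h : γ*q ≤ p)
    (hg : γ^2*q^2 - p^2 = g) : g ≤ 0 := by
  subst hg
  have h2 : (γ*q)*(γ*q) ≤ p*p := mul_self_le_mul_self (by positivity) h
  nlinarith

lemma qf_abs_bound (W : Submodule ℝ (Euc d)) (γ : ℝ) (hγ2 : 0 ≤ γ^2) (y1 y2 : Euc d) :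
    |γ^2*(inner ℝ (y1 - projS W y1) (y2 - projS W y2) : ℝ)
        - (inner ℝ (projS W y1) (projS W y2) : ℝ)|
      ≤ γ^2*(‖y1 - projS W y1‖*‖y2 - projS W y2‖) + ‖projS W y1‖*‖projS W y2‖ := by
  have hiQ := abs_real_inner_le_norm (y1 - projS W y1) (y2 - projS W y2)
  have hiP := abs_real_inner_le_norm (projS W y1) (projS W y2)
  have habs := abs_sub (γ^2*(inner ℝ (y1 - projS W y1) (y2 - projS W y2) : ℝ))
    ((inner ℝ (projS W y1) (projS W y2) : ℝ))
  rw [abs_mul, abs_of_nonneg hγ2] at habs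
  have h1 := mul_le_mul_of_nonneg_left hiQ hγ2
  linarith

lemma helper_conv {A B Cc s1 s2 u : ℝ} (hc : Cc ≤ 0) (h1 : s1 ≤ u) (h2 : u ≤ s2)
    (hl : s1 < s2) (g1 : 0 < A + 2*B*s1 + Cc*s1^2) (g2 : 0 < A + 2*B*s2 + Cc*s2^2) :
    0 ≤ A + 2*B*u + Cc*u^2 := by
  nlinarith [mul_nonneg (mul_nonneg (sub_nonneg.mpr h1) (sub_nonneg.mpr h2))
      (le_of_lt (sub_pos.mpr hl)),
    mul_nonneg (sub_nonneg.mpr h2) (le_of_lt g1),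
    mul_nonneg (sub_nonneg.mpr h1) (le_of_lt g2)]

lemma helper_absB {γ ε S qu qt pu pt B : ℝ} (hγ : 0 < γ) (hε0 : 0 < ε)
    (hqu : 0 ≤ qu) (hqt : 0 ≤ qt) (hpu : 0 ≤ pu) (hpt : 0 ≤ pt)
    (hPu : pu ≤ γ*ε*qu) (hPt : pt ≤ γ*ε*qt)
    (hiB : |B| ≤ γ^2*(qu*qt) + pu*pt) (hS : S = γ^2 + (γ*ε)^2) :
    |B| ≤ S * (qu*qt) := by
  have h1 : pu*pt ≤ (γ*ε*qu)*(γ*ε*qt) :=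
    mul_le_mul hPu hPt hpt (by positivity)
  calc |B| ≤ γ^2*(qu*qt) + pu*pt := hiB
    _ ≤ γ^2*(qu*qt) + (γ*ε*qu)*(γ*ε*qt) := by linarith
    _ = S * (qu*qt) := by rw [hS]; ring

lemma helper_Bfinal {S D M B a b gu gt : ℝ} (hDpos : 0 < D) (hMpos : 0 < M)
    (hM : M = (S/D)^2) (habs : |B| ≤ S*(a*b)) (hDu : D*a^2 ≤ gu) (hDt : D*b^2 ≤ gt)
    (hgu : 0 < gu) : B^2 ≤ M*gu*gt := by
  have hsq : B^2 ≤ (S*(a*b))^2 := by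
    have hh := abs_le.mp habs
    exact sq_le_sq' hh.1 hh.2
  have hid : (S*(a*b))^2 = M*(D*a^2)*(D*b^2) := by
    subst hM
    field_simp
  calc B^2 ≤ (S*(a*b))^2 := hsq
    _ = M*(D*a^2)*(D*b^2) := hid
    _ ≤ M*gu*gt := by
        apply mul_le_mul
        · exact mul_le_mul_of_nonneg_left hDu (le_of_lt hMpos)
        · exact hDt
        · exact mul_nonneg (le_of_lt hDpos) (sq_nonneg _)
        · exact mul_nonneg (le_of_lt hMpos) (le_of_lt hgu)

/-! ### the key uniqueness lemma -/

section KeyLemma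

variable {W : Submodule ℝ (Euc d)} {γ ε : ℝ} {C : ℕ → (Euc d ≃L[ℝ] Euc d)}

set_option maxHeartbeats 2000000 in
lemma keyLemma (hγ : 0 < γ) (hε0 : 0 < ε) (hε1 : ε < 1)
    (hC : ∀ n, ⇑(C n).symm '' Ko W γ ⊆ Ko W (γ * ε))
    {v v' : Euc d} (hv : v ∈ Hset W γ C) (hv' : v' ∈ Hset W γ C)
    (hQ0 : (v - v') - projS W (v - v') = 0) : v = v' := by
  by_contra hne
  set w := v - v' with hwdef
  have hwne : w ≠ 0 := sub_ne_zero.mpr hne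
  have hvert : ∀ u : Euc d, u ∈ Hset W γ C → u - projS W u = 0 → u = 0 := by
    intro u hu hQu
    have hKc : u ∈ Kc W (γ * ε) := by
      have := Hset_Kc_eps hγ hε0 hε1 hC hu 0
      rwa [T_zero] at this
    have h1 : ‖projS W u‖ ≤ γ * ε * ‖u - projS W u‖ := hKc
    rw [hQu, norm_zero, mul_zero] at h1
    have h2 : projS W u = 0 := norm_le_zero_iff.mp h1
    have h3 := sub_eq_zero.mp hQu
    rw [h3, h2]
  by_cases hQv' : v' - projS W v' = 0
  · -- degenerate: both vertical, hence zero
    have hv'0 : v' = 0 := hvert v' hv' hQv'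
    have hQv : v - projS W v = 0 := by
      have h4 : v - projS W v = (w - projS W w) + (v' - projS W v') := by
        rw [hwdef, map_sub]; abel
      rw [h4, hQ0, hQv', add_zero]
    have hv0 : v = 0 := hvert v hv hQv
    exact hne (by rw [hv0, hv'0])
  · -- main case
    set J : Set ℝ := {u : ℝ | v' + u • w ∈ Hset W γ C} with hJdef
    have h0J : (0:ℝ) ∈ J := by
      show v' + (0:ℝ) • w ∈ Hset W γ C
      rw [zero_smul, add_zero]; exact hv'
    have h1J : (1:ℝ) ∈ J := by
      show v' + (1:ℝ) • w ∈ Hset W γ C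
      rw [one_smul, hwdef]
      have h5 : v' + (v - v') = v := by abel
      rw [h5]; exact hv
    set x : ℕ → Euc d := fun m => T C m v' with hxdef
    set z : ℕ → Euc d := fun m => T C m w with hzdef
    obtain ⟨Aq, hAqdef⟩ : ∃ Aq : ℕ → ℝ,
        Aq = fun m => γ^2*‖x m - projS W (x m)‖^2 - ‖projS W (x m)‖^2 := ⟨_, rfl⟩
    obtain ⟨Bq, hBqdef⟩ : ∃ Bq : ℕ → ℝ,
        Bq = fun m => γ^2*(inner ℝ (x m - projS W (x m)) (z m - projS W (z m)) : ℝ)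
          - (inner ℝ (projS W (x m)) (projS W (z m)) : ℝ) := ⟨_, rfl⟩
    obtain ⟨Cq, hCqdef⟩ : ∃ Cq : ℕ → ℝ,
        Cq = fun m => γ^2*‖z m - projS W (z m)‖^2 - ‖projS W (z m)‖^2 := ⟨_, rfl⟩
    have hy : ∀ (m : ℕ) (u : ℝ), T C m (v' + u • w) = x m + u • z m := by
      intro m u; rw [map_add, map_smul]
    have hgval : ∀ (m : ℕ) (u : ℝ),
        γ^2*‖(x m + u • z m) - projS W (x m + u • z m)‖^2
          - ‖projS W (x m + u • z m)‖^2 = Aq m + 2*Bq m*u + Cq m*u^2 := by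
      intro m u
      simp only [hAqdef, hBqdef, hCqdef]
      exact gval_eq W γ (x m) (z m) u
    have hqf : ∀ (m : ℕ) (u t : ℝ),
        γ^2*(inner ℝ ((x m + u • z m) - projS W (x m + u • z m))
            ((x m + t • z m) - projS W (x m + t • z m)) : ℝ)
          - (inner ℝ (projS W (x m + u • z m)) (projS W (x m + t • z m)) : ℝ)
          = Aq m + Bq m*(u+t) + Cq m*(u*t) := by
      intro m u t
      simp only [hAqdef, hBqdef, hCqdef]
      exact qf_eq W γ (x m) (z m) u t
    obtain ⟨D, hDdef⟩ : ∃ D : ℝ, D = γ^2 - (γ*ε)^2 := ⟨_, rfl⟩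
    obtain ⟨S, hSdef⟩ : ∃ S : ℝ, S = γ^2 + (γ*ε)^2 := ⟨_, rfl⟩
    have hDpos : 0 < D := by
      have h8 : 0 < γ*γ*((1-ε)*(1+ε)) :=
        mul_pos (mul_pos hγ hγ) (mul_pos (by linarith) (by linarith))
      rw [hDdef]; nlinarith
    have hSD : D ≤ S := by rw [hDdef, hSdef]; nlinarith [sq_nonneg (γ*ε)]
    obtain ⟨M, hMdef⟩ : ∃ M : ℝ, M = (S/D)^2 := ⟨_, rfl⟩
    have hM1 : 1 ≤ M := by
      have h1 : 1 ≤ S/D := (one_le_div hDpos).mpr hSD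
      rw [hMdef]; nlinarith
    have hMpos : 0 < M := lt_of_lt_of_le one_pos hM1
    -- core facts about points of J
    have hcore : ∀ u ∈ J, ∀ m : ℕ,
        0 < ‖(x m + u • z m) - projS W (x m + u • z m)‖ ∧
        ‖projS W (x m + u • z m)‖ ≤ γ*ε*‖(x m + u • z m) - projS W (x m + u • z m)‖ := by
      intro u hu m
      have hmem : T C m (v' + u • w) ∈ Kc W (γ*ε) := Hset_Kc_eps hγ hε0 hε1 hC hu m
      rw [hy] at hmem
      have hP : ‖projS W (x m + u • z m)‖
          ≤ γ*ε*‖(x m + u • z m) - projS W (x m + u • z m)‖ := hmem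
      refine ⟨?_, hP⟩
      rcases (norm_nonneg ((x m + u • z m) - projS W (x m + u • z m))).lt_or_eq with h | h
      · exact h
      · exfalso
        have h0 : ‖(x m + u • z m) - projS W (x m + u • z m)‖ = 0 := h.symm
        have hPz : projS W (x m + u • z m) = 0 := by
          apply norm_le_zero_iff.mp
          calc ‖projS W (x m + u • z m)‖
              ≤ γ*ε*‖(x m + u • z m) - projS W (x m + u • z m)‖ := hP
            _ = 0 := by rw [h0, mul_zero]
        have hy0 : x m + u • z m = 0 := by
          have h1 : (x m + u • z m) - projS W (x m + u • z m) = 0 := norm_eq_zero.mp h0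
          have h2 := sub_eq_zero.mp h1
          rw [h2, hPz]
        have h3 : v' + u • w = 0 := by
          apply T_injective C m
          rw [hy, map_zero, hy0]
        have e1 : (v' - projS W v') + u • (w - projS W w)
            = (v' + u • w) - projS W (v' + u • w) := by
          rw [map_add, map_smul, smul_sub]; abel
        rw [h3, map_zero, sub_zero, hQ0, smul_zero, add_zero] at e1
        exact hQv' e1
    have hgpos : ∀ u ∈ J, ∀ m : ℕ,
        D * ‖(x m + u • z m) - projS W (x m + u • z m)‖^2 ≤ Aq m + 2*Bq m*u + Cq m*u^2 ∧
        0 < Aq m + 2*Bq m*u + Cq m*u^2 := by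
      intro u hu m
      obtain ⟨ha, hP⟩ := hcore u hu m
      exact helper_quad_pos hγ hε0 hε1 ha hP (norm_nonneg _) (hgval m u) hDdef
    have hBbound : ∀ u ∈ J, ∀ t ∈ J, ∀ m : ℕ,
        (Aq m + Bq m*(u+t) + Cq m*(u*t))^2
          ≤ M * (Aq m + 2*Bq m*u + Cq m*u^2) * (Aq m + 2*Bq m*t + Cq m*t^2) := by
      intro u hu t ht m
      obtain ⟨hau, hPu⟩ := hcore u hu m
      obtain ⟨hat, hPt⟩ := hcore t ht m
      obtain ⟨hDu, hgu⟩ := hgpos u hu m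
      obtain ⟨hDt, hgt⟩ := hgpos t ht m
      have hiB : |Aq m + Bq m*(u+t) + Cq m*(u*t)|
          ≤ γ^2*(‖(x m + u • z m) - projS W (x m + u • z m)‖
                * ‖(x m + t • z m) - projS W (x m + t • z m)‖)
            + ‖projS W (x m + u • z m)‖*‖projS W (x m + t • z m)‖ := by
        rw [← hqf m u t]
        exact qf_abs_bound W γ (by positivity) (x m + u • z m) (x m + t • z m)
      have habsS : |Aq m + Bq m*(u+t) + Cq m*(u*t)|
          ≤ S * (‖(x m + u • z m) - projS W (x m + u • z m)‖
                * ‖(x m + t • z m) - projS W (x m + t • z m)‖) :=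
        helper_absB hγ hε0 (norm_nonneg _) (norm_nonneg _) (norm_nonneg _) (norm_nonneg _)
          hPu hPt hiB hSdef
      exact helper_Bfinal hDpos hMpos hMdef habsS hDu hDt hgu
    have hCqle : ∀ m, 1 ≤ m → Cq m ≤ 0 := by
      intro m hm
      have hnot : T C m w ∉ Ko W γ := notKo_gamma hγ hε0 hε1 hC hQ0 hm
      have h1 : γ * ‖z m - projS W (z m)‖ ≤ ‖projS W (z m)‖ := by
        by_contra hcon
        push_neg at hcon
        exact hnot hcon
      apply helper_Cq hγ (norm_nonneg _) h1
      simp only [hCqdef]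
    have hnotJ : ∀ u : ℝ, u ∉ J → ∃ m, 1 ≤ m ∧ Aq m + 2*Bq m*u + Cq m*u^2 < 0 := by
      intro u hu
      have h1 : ¬ ∀ n, 1 ≤ n → T C n (v' + u • w) ∈ Kc W γ :=
        fun h => hu (mem_Hset_iff.mpr h)
      push_neg at h1
      obtain ⟨m, hm1, hmem⟩ := h1
      refine ⟨m, hm1, ?_⟩
      rw [hy] at hmem
      have h2 : γ*‖(x m + u • z m) - projS W (x m + u • z m)‖
          < ‖projS W (x m + u • z m)‖ := not_le.mp hmem
      exact helper_notJ hγ (norm_nonneg _) h2 (hgval m u)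
    have hJof : ∀ u : ℝ, (∀ m, 1 ≤ m → 0 ≤ Aq m + 2*Bq m*u + Cq m*u^2) → u ∈ J := by
      intro u h
      show v' + u • w ∈ Hset W γ C
      rw [mem_Hset_iff]
      intro n hn
      rw [hy]
      show ‖projS W (x n + u • z n)‖ ≤ γ * ‖(x n + u • z n) - projS W (x n + u • z n)‖
      exact helper_Jof hγ (norm_nonneg _) (norm_nonneg _) (hgval n u) (h n hn)
    have hconv : ∀ s1 ∈ J, ∀ s2 ∈ J, ∀ u : ℝ, s1 ≤ u → u ≤ s2 → u ∈ J := by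
      intro s1 hs1 s2 hs2 u h1 h2
      rcases eq_or_lt_of_le (le_trans h1 h2) with heq | hlt
      · have h3 : u = s1 := le_antisymm (heq ▸ h2) h1
        rw [h3]; exact hs1
      · apply hJof
        intro m hm
        exact helper_conv (hCqle m hm) h1 h2 hlt (hgpos s1 hs1 m).2 (hgpos s2 hs2 m).2
    by_cases hbdd : BddBelow J
    · -- bounded below: cross-ratio contradiction
      obtain ⟨α, hαdef⟩ : ∃ α : ℝ, α = sInf J := ⟨_, rfl⟩
      have hJne : J.Nonempty := ⟨0, h0J⟩
      have hα0 : α ≤ 0 := by rw [hαdef]; exact csInf_le hbdd h0J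
      obtain ⟨K0, hK0def⟩ : ∃ K0 : ℝ, K0 = 4*M - 2 := ⟨_, rfl⟩
      have hK0 : 2 ≤ K0 := by rw [hK0def]; linarith
      have h1α : 0 < 1 - α := by linarith
      obtain ⟨η, hηdef⟩ : ∃ η : ℝ, η = (1 - α)/(2*K0 + 2) := ⟨_, rfl⟩
      have hK0' : (0:ℝ) < 2*K0 + 2 := by linarith
      have hηpos : 0 < η := by rw [hηdef]; positivity
      have hηeq : 2*(K0*η) + 2*η = 1 - α := by
        have h9 : η * (2*K0+2) = 1 - α := by
          rw [hηdef]; exact div_mul_cancel₀ _ (ne_of_gt hK0')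
        linear_combination h9
      obtain ⟨η', hη'def⟩ : ∃ η' : ℝ, η' = min η ((1-α)/2) := ⟨_, rfl⟩
      have hη'pos : 0 < η' := by rw [hη'def]; exact lt_min hηpos (by positivity)
      have hη'le : η' ≤ η := by rw [hη'def]; exact min_le_left _ _
      have hη'le2 : η' ≤ (1-α)/2 := by rw [hη'def]; exact min_le_right _ _
      obtain ⟨s, hsJ, hsα, hsub⟩ : ∃ s ∈ J, α < s ∧ s - α < η' := by
        obtain ⟨j, hjJ, hjlt⟩ := exists_lt_of_csInf_lt hJne
          (by rw [← hαdef]; linarith : sInf J < α + η'/2)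
        have hjge : α ≤ j := by rw [hαdef]; exact csInf_le hbdd hjJ
        rcases lt_or_eq_of_le hjge with h | h
        · exact ⟨j, hjJ, h, by linarith⟩
        · refine ⟨α + η'/2, ?_, by linarith, by linarith⟩
          have hαJ : α ∈ J := by rw [h]; exact hjJ
          exact hconv α hαJ 1 h1J (α + η'/2) (by linarith) (by linarith)
      have hs1 : s < 1 := by linarith
      obtain ⟨p, hpdef⟩ : ∃ p : ℝ, p = 2*α - s := ⟨_, rfl⟩
      have hpJ : p ∉ J := by
        intro hmem
        have h6 := csInf_le hbdd hmem
        rw [← hαdef, hpdef] at h6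
        linarith
      obtain ⟨m, hm1, hgp⟩ := hnotJ p hpJ
      have hgs := (hgpos s hsJ m).2
      have hg1 := (hgpos 1 h1J m).2
      have hps : p ≤ s := by rw [hpdef]; linarith
      obtain ⟨r, hrIcc, hr0⟩ : ∃ r ∈ Set.Icc p s, Aq m + 2*Bq m*r + Cq m*r^2 = 0 := by
        have hcont : ContinuousOn (fun u : ℝ => Aq m + 2*Bq m*u + Cq m*u^2) (Set.Icc p s) := by
          apply Continuous.continuousOn
          fun_prop
        have h0mem : (0:ℝ) ∈ Set.Icc (Aq m + 2*Bq m*p + Cq m*p^2) (Aq m + 2*Bq m*s + Cq m*s^2) :=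
          Set.mem_Icc.mpr ⟨le_of_lt hgp, le_of_lt hgs⟩
        obtain ⟨r, hr, hr0⟩ := intermediate_value_Icc hps hcont h0mem
        exact ⟨r, hr, hr0⟩
      have hrp : p ≤ r := hrIcc.1
      have hrs : r < s := by
        rcases lt_or_eq_of_le hrIcc.2 with h | h
        · exact h
        · exfalso; rw [h] at hr0; linarith
      have hident1 : (s-r)*(2*(Bq m + Cq m*r) + Cq m*(s-r)) = Aq m + 2*Bq m*s + Cq m*s^2 := by
        linear_combination (-1 : ℝ) * hr0
      have hident2 : (1-r)*(2*(Bq m + Cq m*r) + Cq m*(1-r)) = Aq m + 2*Bq m*1 + Cq m*1^2 := by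
        linear_combination (-1 : ℝ) * hr0
      have hident3 : ((Bq m + Cq m*r)*((s-r)+(1-r)) + Cq m*(s-r)*(1-r))
          = Aq m + Bq m*(s+1) + Cq m*(s*1) := by
        linear_combination (-1 : ℝ) * hr0
      have happ : (1-r) ≤ (4*M - 2)*(s-r) := by
        apply lemQ (Cc := Cq m) (β := Bq m + Cq m*r) (M := M) (hCqle m hm1)
          (by linarith) (by linarith)
        · rw [hident1]; exact hgs
        · rw [hident2]; exact hg1
        · rw [hident3, hident1, hident2]
          exact hBbound s hsJ 1 h1J m
      -- final contradiction
      have hfin1 : s - r ≤ 2*(s - α) := by rw [hpdef] at hrp; linarith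
      have hfin2 : s - α < η := lt_of_lt_of_le hsub hη'le
      have hK0pos : 0 < K0 := by linarith
      have hA1 : 1 - r ≤ K0 * (s - r) := by rw [hK0def]; exact happ
      have hA2 : K0*(s-r) ≤ K0*(2*(s-α)) := mul_le_mul_of_nonneg_left hfin1 (le_of_lt hK0pos)
      have hA3 : K0*(2*(s-α)) < K0*(2*η) := by
        apply mul_lt_mul_of_pos_left _ hK0pos
        linarith
      have hA4 : 1 - s ≤ 1 - r := by linarith
      have hA5 : 1 - α - η < 1 - s := by linarith
      have hA6 : K0*(2*η) = 2*(K0*η) := by ring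
      linarith
    · -- unbounded below: the vertical direction lies in H
      rw [not_bddBelow_iff] at hbdd
      have hseq : ∀ j : ℕ, ∃ y ∈ J, y < -((j:ℝ)+1) := fun j => hbdd _
      choose sj hsjJ hsjlt using hseq
      have hsjneg : ∀ j, sj j < 0 := by
        intro j
        have := hsjlt j
        have h7 : (0:ℝ) ≤ (j:ℝ) := Nat.cast_nonneg j
        linarith
      have hsjne : ∀ j, sj j ≠ 0 := fun j => ne_of_lt (hsjneg j)
      set uu : ℕ → Euc d := fun j => (sj j)⁻¹ • (v' + sj j • w) with huudef
      have huumem : ∀ j, uu j ∈ Hset W γ C := fun j =>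
        smul_mem_Hset hγ hε0 hε1 hC (hsjJ j) _
      have huueq : ∀ j, uu j = (sj j)⁻¹ • v' + w := by
        intro j
        rw [huudef]
        simp only [smul_add, smul_smul, inv_mul_cancel₀ (hsjne j), one_smul]
      have htend : Filter.Tendsto uu Filter.atTop (nhds w) := by
        have h1 : Filter.Tendsto (fun j : ℕ => (sj j)⁻¹ • v') Filter.atTop (nhds 0) := by
          apply squeeze_zero_norm (a := fun j : ℕ => ‖v'‖ * ((j:ℝ)+1)⁻¹)
          · intro j
            rw [norm_smul]
            have hb1 : ((j:ℝ)+1) ≤ |sj j| := by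
              rw [abs_of_neg (hsjneg j)]
              have := hsjlt j
              linarith
            have hb2 : |(sj j)⁻¹| ≤ ((j:ℝ)+1)⁻¹ := by
              rw [abs_inv]
              apply inv_anti₀ (by positivity) hb1
            calc |(sj j)⁻¹| * ‖v'‖ ≤ ((j:ℝ)+1)⁻¹ * ‖v'‖ :=
                  mul_le_mul_of_nonneg_right hb2 (norm_nonneg _)
              _ = ‖v'‖ * ((j:ℝ)+1)⁻¹ := by ring
          · have h2 : Filter.Tendsto (fun j : ℕ => ((j:ℝ)+1)⁻¹) Filter.atTop (nhds 0) := by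
              simpa [one_div] using tendsto_one_div_add_atTop_nhds_zero_nat (𝕜 := ℝ)
            have h3 := h2.const_mul ‖v'‖
            simpa using h3
        have h4 := h1.add (tendsto_const_nhds (x := w))
        rw [zero_add] at h4
        apply h4.congr
        intro j
        rw [huueq j]
      have hwH : w ∈ Hset W γ C :=
        (isClosed_Hset hγ hε0 hε1 hC).mem_of_tendsto htend (Filter.Eventually.of_forall huumem)
      exact hwne (hvert w hwH hQ0)

end KeyLemma

/-! ### existence of graph elements and assembly -/

lemma mem_Kc_of_orthogonal (W : Submodule ℝ (Euc d)) {γ : ℝ} (hγ : 0 ≤ γ) {ξ : Euc d}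
    (hξ : ξ ∈ Wᗮ) : ξ ∈ Kc W γ := by
  show ‖projS W ξ‖ ≤ γ * ‖ξ - projS W ξ‖
  rw [projS_of_mem_orthogonal W hξ, norm_zero, sub_zero]
  positivity

section Assembly

variable {W : Submodule ℝ (Euc d)} {γ ε : ℝ} {C : ℕ → (Euc d ≃L[ℝ] Euc d)}

lemma lim_mem_Hset (hγ : 0 < γ) (hε0 : 0 < ε) (hε1 : ε < 1)
    (hC : ∀ n, ⇑(C n).symm '' Ko W γ ⊆ Ko W (γ * ε))
    {c : ℕ → Euc d} {φ : ℕ → ℕ} (hφ : StrictMono φ)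
    (hc : ∀ j, T C (φ j) (c j) ∈ Kc W γ) {u : Euc d}
    (hconv : Filter.Tendsto c Filter.atTop (nhds u)) : u ∈ Hset W γ C := by
  rw [mem_Hset_iff]
  intro m hm
  have hclosed : IsClosed ((⇑(T C m)) ⁻¹' Kc W γ) :=
    (isClosed_Kc W γ).preimage (T C m).continuous
  have hev : ∀ᶠ j in Filter.atTop, c j ∈ (⇑(T C m)) ⁻¹' Kc W γ := by
    filter_upwards [Filter.eventually_ge_atTop m] with j hj
    exact T_Kc_mono hγ hε0 hε1 hC (φ j) (hc j) m (le_trans hj hφ.le_apply)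
  exact hclosed.mem_of_tendsto hconv hev

lemma exists_over (hγ : 0 < γ) (hε0 : 0 < ε) (hε1 : ε < 1)
    (hC : ∀ n, ⇑(C n).symm '' Ko W γ ⊆ Ko W (γ * ε)) (n : ℕ) (ζ : Euc d) (hζ : ζ ∈ Wᗮ) :
    ∃ y : Euc d, T C n y ∈ Wᗮ ∧ y - projS W y = ζ ∧ ‖y‖ ≤ (1+γ)*‖ζ‖ := by
  classical
  set e := compSeqE C n with hedef
  have hecoe : ∀ v : Euc d, e v = T C n v := fun v => congrFun (compSeqE_coe C n) v
  have hmemχ : ∀ b : Wᗮ, (e.symm (b : Euc d)) - projS W (e.symm (b : Euc d)) ∈ Wᗮ :=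
    fun b => sub_projS_mem_orthogonal W _
  set χ : Wᗮ →ₗ[ℝ] Wᗮ := {
    toFun := fun b => ⟨(e.symm (b : Euc d)) - projS W (e.symm (b : Euc d)), hmemχ b⟩
    map_add' := by
      intro b1 b2
      apply Subtype.ext
      show (e.symm ((b1:Euc d) + b2)) - projS W (e.symm ((b1:Euc d) + b2)) = _
      rw [map_add, map_add]
      show _ = ((e.symm (b1:Euc d)) - projS W (e.symm (b1:Euc d)))
        + ((e.symm (b2:Euc d)) - projS W (e.symm (b2:Euc d)))
      abel
    map_smul' := by
      intro cc b
      apply Subtype.ext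
      show (e.symm (cc • (b:Euc d))) - projS W (e.symm (cc • (b:Euc d))) = _
      rw [map_smul, map_smul]
      show _ = cc • ((e.symm (b:Euc d)) - projS W (e.symm (b:Euc d)))
      rw [smul_sub] } with hχdef
  have hvanish : ∀ y : Euc d, T C n y ∈ Kc W γ → y - projS W y = 0 → y = 0 := by
    intro y hyK hQy
    have hy0 : y ∈ Kc W γ := by
      have := T_Kc_mono hγ hε0 hε1 hC n hyK 0 (Nat.zero_le n)
      rwa [T_zero] at this
    have h1 : ‖projS W y‖ ≤ γ * ‖y - projS W y‖ := hy0
    rw [hQy, norm_zero, mul_zero] at h1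
    have h2 : projS W y = 0 := norm_le_zero_iff.mp h1
    have h3 := sub_eq_zero.mp hQy
    rw [h3, h2]
  have hinj : Function.Injective χ := by
    rw [← LinearMap.ker_eq_bot, Submodule.eq_bot_iff]
    intro b hb
    rw [LinearMap.mem_ker] at hb
    have hb' : (e.symm (b : Euc d)) - projS W (e.symm (b : Euc d)) = 0 :=
      congrArg (Subtype.val) hb
    have hTK : T C n (e.symm (b : Euc d)) ∈ Kc W γ := by
      rw [← hecoe, e.apply_symm_apply]
      exact mem_Kc_of_orthogonal W (le_of_lt hγ) b.2
    have h0 : e.symm (b : Euc d) = 0 := hvanish _ hTK hb'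
    apply Subtype.ext
    show (b : Euc d) = 0
    have h5 := congrArg e h0
    rwa [e.apply_symm_apply, map_zero] at h5
  have hsurj : Function.Surjective χ := LinearMap.injective_iff_surjective.mp hinj
  obtain ⟨c, hc⟩ := hsurj ⟨ζ, hζ⟩
  have hTorth : T C n (e.symm (c : Euc d)) ∈ Wᗮ := by
    rw [← hecoe, e.apply_symm_apply]
    exact c.2
  have hQeq : (e.symm (c : Euc d)) - projS W (e.symm (c : Euc d)) = ζ :=
    congrArg (Subtype.val) hc
  refine ⟨e.symm (c : Euc d), hTorth, hQeq, ?_⟩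
  have hyK : e.symm (c : Euc d) ∈ Kc W γ := by
    have hTK : T C n (e.symm (c : Euc d)) ∈ Kc W γ :=
      mem_Kc_of_orthogonal W (le_of_lt hγ) hTorth
    have := T_Kc_mono hγ hε0 hε1 hC n hTK 0 (Nat.zero_le n)
    rwa [T_zero] at this
  have h1 : ‖projS W (e.symm (c : Euc d))‖ ≤ γ * ‖ζ‖ := by
    calc ‖projS W (e.symm (c : Euc d))‖
        ≤ γ * ‖(e.symm (c : Euc d)) - projS W (e.symm (c : Euc d))‖ := hyK
      _ = γ * ‖ζ‖ := by rw [hQeq]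
  calc ‖e.symm (c : Euc d)‖
      = ‖((e.symm (c : Euc d)) - projS W (e.symm (c : Euc d)))
          + projS W (e.symm (c : Euc d))‖ := by congr 1; abel
    _ ≤ ‖(e.symm (c : Euc d)) - projS W (e.symm (c : Euc d))‖
          + ‖projS W (e.symm (c : Euc d))‖ := norm_add_le _ _
    _ ≤ ‖ζ‖ + γ * ‖ζ‖ := by rw [hQeq]; linarith
    _ = (1+γ)*‖ζ‖ := by ring

lemma add_mem_Hset (hγ : 0 < γ) (hε0 : 0 < ε) (hε1 : ε < 1)
    (hC : ∀ n, ⇑(C n).symm '' Ko W γ ⊆ Ko W (γ * ε))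
    {v1 v2 : Euc d} (h1 : v1 ∈ Hset W γ C) (h2 : v2 ∈ Hset W γ C) :
    v1 + v2 ∈ Hset W γ C := by
  classical
  have hζ1 : v1 - projS W v1 ∈ Wᗮ := sub_projS_mem_orthogonal W v1
  have hζ2 : v2 - projS W v2 ∈ Wᗮ := sub_projS_mem_orthogonal W v2
  choose y1 hy1K hy1Q hy1B using fun n => exists_over hγ hε0 hε1 hC n (v1 - projS W v1) hζ1
  choose y2 hy2K hy2Q hy2B using fun n => exists_over hγ hε0 hε1 hC n (v2 - projS W v2) hζ2
  set R : ℝ := max ((1+γ)*‖v1 - projS W v1‖) ((1+γ)*‖v2 - projS W v2‖) with hRdef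
  have hball : ∀ n, (y1 n, y2 n) ∈ Metric.closedBall (0 : Euc d × Euc d) R := by
    intro n
    rw [Metric.mem_closedBall, dist_zero_right]
    have hn : ‖((y1 n, y2 n) : Euc d × Euc d)‖ = max ‖y1 n‖ ‖y2 n‖ := rfl
    rw [hn]
    exact max_le_max (hy1B n) (hy2B n)
  obtain ⟨a, -, φ, hφ, hconv⟩ := tendsto_subseq_of_bounded
    (Metric.isBounded_closedBall (x := (0 : Euc d × Euc d)) (r := R)) hball
  obtain ⟨u1, u2⟩ := a
  have hconv1 : Filter.Tendsto (fun j => y1 (φ j)) Filter.atTop (nhds u1) := by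
    have := (continuous_fst.tendsto ((u1, u2) : Euc d × Euc d)).comp hconv
    exact this
  have hconv2 : Filter.Tendsto (fun j => y2 (φ j)) Filter.atTop (nhds u2) := by
    have := (continuous_snd.tendsto ((u1, u2) : Euc d × Euc d)).comp hconv
    exact this
  have hu1H : u1 ∈ Hset W γ C :=
    lim_mem_Hset hγ hε0 hε1 hC hφ
      (fun j => mem_Kc_of_orthogonal W (le_of_lt hγ) (hy1K (φ j))) hconv1
  have hu2H : u2 ∈ Hset W γ C :=
    lim_mem_Hset hγ hε0 hε1 hC hφ
      (fun j => mem_Kc_of_orthogonal W (le_of_lt hγ) (hy2K (φ j))) hconv2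
  have huaddH : u1 + u2 ∈ Hset W γ C := by
    apply lim_mem_Hset hγ hε0 hε1 hC hφ (c := fun j => y1 (φ j) + y2 (φ j))
      (fun j => ?_) (hconv1.add hconv2)
    rw [map_add]
    exact mem_Kc_of_orthogonal W (le_of_lt hγ)
      (Submodule.add_mem _ (hy1K (φ j)) (hy2K (φ j)))
  -- Q-parts of the limits agree with the originals
  have hQlim : ∀ (yy : ℕ → Euc d) (uu : Euc d) (ζ : Euc d),
      Filter.Tendsto yy Filter.atTop (nhds uu) → (∀ j, yy j - projS W (yy j) = ζ) →
      uu - projS W uu = ζ := by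
    intro yy uu ζ hconv' hQ
    have hcont : Filter.Tendsto (fun j => yy j - projS W (yy j))
        Filter.atTop (nhds (uu - projS W uu)) :=
      hconv'.sub (((projS W).continuous.tendsto uu).comp hconv')
    have heq : (fun j => yy j - projS W (yy j)) = fun _ => ζ := by
      funext j; exact hQ j
    rw [heq] at hcont
    exact tendsto_nhds_unique hcont tendsto_const_nhds
  have hQu1 : u1 - projS W u1 = v1 - projS W v1 :=
    hQlim _ _ _ hconv1 (fun j => hy1Q (φ j))
  have hQu2 : u2 - projS W u2 = v2 - projS W v2 :=
    hQlim _ _ _ hconv2 (fun j => hy2Q (φ j))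
  have hv1u1 : v1 = u1 := by
    apply keyLemma hγ hε0 hε1 hC h1 hu1H
    have he : v1 - u1 - projS W (v1 - u1) = (v1 - projS W v1) - (u1 - projS W u1) := by
      rw [map_sub]; abel
    rw [he, hQu1, sub_self]
  have hv2u2 : v2 = u2 := by
    apply keyLemma hγ hε0 hε1 hC h2 hu2H
    have he : v2 - u2 - projS W (v2 - u2) = (v2 - projS W v2) - (u2 - projS W u2) := by
      rw [map_sub]; abel
    rw [he, hQu2, sub_self]
  rw [hv1u1, hv2u2]
  exact huaddH

/-- abstract main theorem -/
theorem mainAbstract (hγ : 0 < γ) (hε0 : 0 < ε) (hε1 : ε < 1)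
    (hC : ∀ n, ⇑(C n).symm '' Ko W γ ⊆ Ko W (γ * ε)) :
    ∃ V : Submodule ℝ (Euc d), (V : Set (Euc d)) = Hset W γ C := by
  refine ⟨{ carrier := Hset W γ C
            add_mem' := fun ha hb => add_mem_Hset hγ hε0 hε1 hC ha hb
            zero_mem' := zero_mem_Hset hγ hε0 hε1 hC
            smul_mem' := fun c v hv => smul_mem_Hset hγ hε0 hε1 hC hv c }, rfl⟩

end Assembly

end ConeProofAux

theorem cone_intersection_is_subspace {d k : ℕ} (E : Fin k → Submodule ℝ (Euc d))
    (horth : ∀ i j : Fin k, i ≠ j → ∀ v ∈ E i, ∀ w ∈ E j, (inner ℝ v w : ℝ) = 0)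
    (hspan : (⨆ i, E i) = ⊤)
    (γ κ δ : ℝ) (hγ : 0 < γ) (hδ : 0 < δ) (hκδ : δ / 2 < κ)
    (C : ℕ → (Euc d ≃L[ℝ] Euc d))
    (hC : ∀ n : ℕ, ⇑(C n).symm '' coneL E (k - 1) γ ⊆
      coneL E (k - 1) (γ * Real.exp (-κ + δ / 2))) :
    ∃ V : Submodule ℝ (Euc d), (V : Set (Euc d)) =
      ⋂ (n : ℕ) (_ : 1 ≤ n),
        (⇑(compSeq (fun m => ((C m : Euc d →L[ℝ] Euc d))) n)) ⁻¹' coneLc E (k - 1) γ := by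
  have hε0 : 0 < Real.exp (-κ + δ / 2) := Real.exp_pos _
  have hε1 : Real.exp (-κ + δ / 2) < 1 := by
    rw [← Real.exp_zero]
    exact Real.exp_lt_exp.mpr (by linarith)
  obtain ⟨V, hV⟩ := ConeProofAux.mainAbstract (W := Vlow E (k-1)) (C := C) hγ hε0 hε1 hC
  exact ⟨V, hV⟩
end
end
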